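/- arXiv:1309.2085 — 7 statements merged into one kernel-verified Lean document; each statement's English description precedes it below -/
import Mathlib

section
/- For every n ≥ 1 and every field F, the Dynkin–Specht–Wever element satisfies ω_n² = n·ω_n in the group algebra F𝔖_n. -/
/-- The partial Dynkin–Specht–Wever element `(1-c_2)(1-c_3)⋯(1-c_m)` inside `F𝔖_n`,
where `c_k` is the backward cycle `(k, k-1, …, 2, 1)` of `𝔖_n` (in zero-based indexing,
`c_k` is the inverse of `Fin.cycleRange (k-1)`). -/
noncomputable def dswPartial (F : Type*) [Field F] (n m : ℕ) :
    MonoidAlgebra F (Equiv.Perm (Fin n)) :=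
  (((List.finRange n).take m).tail.map
    (fun j => (1 : MonoidAlgebra F (Equiv.Perm (Fin n))) -
      MonoidAlgebra.of F (Equiv.Perm (Fin n)) (Fin.cycleRange j)⁻¹)).prod

/-- The Dynkin–Specht–Wever element `ω_n = (1-c_2)(1-c_3)⋯(1-c_n) ∈ F𝔖_n`; `ω_1 = 1`. -/
noncomputable def dsw (F : Type*) [Field F] (n : ℕ) :
    MonoidAlgebra F (Equiv.Perm (Fin n)) :=
  dswPartial F n n

namespace DSWAux

open MonoidAlgebra

noncomputable section

variable (F : Type*) [Field F] (n : ℕ)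

/-- The free associative algebra on `n` letters, as a monoid algebra over the free monoid. -/
abbrev FA := MonoidAlgebra F (FreeMonoid (Fin n))

variable {F n}

/-- basis word -/
def wd (l : List (Fin n)) : FA F n := MonoidAlgebra.single (FreeMonoid.ofList l) 1

lemma wd_append (l₁ l₂ : List (Fin n)) :
    wd (F := F) (l₁ ++ l₂) = wd l₁ * wd l₂ := by
  rw [wd, wd, wd, FreeMonoid.ofList_append, MonoidAlgebra.single_mul_single, one_mul]

/-- letter -/
def yy (x : Fin n) : FA F n := wd [x]

lemma wd_cons (x : Fin n) (l : List (Fin n)) :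
    wd (F := F) (x :: l) = yy x * wd l := by
  rw [yy, ← wd_append]; rfl

lemma wd_nil : wd (F := F) ([] : List (Fin n)) = 1 := by
  rw [wd, FreeMonoid.ofList_nil, MonoidAlgebra.one_def]

/-- left-normed bracketing of a word -/
def lb : List (Fin n) → FA F n
  | [] => 0
  | x :: xs => xs.foldl (fun a z => a * yy z - yy z * a) (yy x)

@[simp] lemma lb_singleton (x : Fin n) : lb (F := F) [x] = yy x := rfl

lemma lb_concat {l : List (Fin n)} (hl : l ≠ []) (x : Fin n) :
    lb (F := F) (l ++ [x]) = lb l * yy x - yy x * lb l := by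
  obtain ⟨y, ys, rfl⟩ := List.exists_cons_of_ne_nil hl
  show ((ys ++ [x]).foldl _ _) = _
  rw [List.foldl_append]
  rfl

/-- The Dynkin operator: bracketing each basis word. -/
def DD : FA F n →ₗ[F] FA F n :=
  Finsupp.lift (FA F n) F (FreeMonoid (Fin n)) (fun w => lb (FreeMonoid.toList w)) ∘ₗ
    (MonoidAlgebra.coeffLinearEquiv F).toLinearMap

lemma DD_single (w : FreeMonoid (Fin n)) (c : F) :
    DD (MonoidAlgebra.single w c) = c • lb (FreeMonoid.toList w) := by
  rw [DD, LinearMap.comp_apply, LinearEquiv.coe_coe, MonoidAlgebra.coeffLinearEquiv_apply,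
    MonoidAlgebra.coeff_single]
  erw [Finsupp.lift_apply]
  exact Finsupp.sum_single_index (by simp)

lemma DD_wd (l : List (Fin n)) : DD (wd (F := F) l) = lb l := by
  rw [wd, DD_single, FreeMonoid.toList_ofList, one_smul]

/-- the word list of a permutation -/
def wl (σ : Equiv.Perm (Fin n)) : List (Fin n) := (List.finRange n).map σ

@[simp] lemma wl_length (σ : Equiv.Perm (Fin n)) : (wl σ).length = n := by
  simp [wl]

lemma wl_injective : Function.Injective (wl (n := n)) := by
  intro σ τ h
  ext i
  have hi : (i : ℕ) < (List.finRange n).length := by simpa using i.2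
  have h2 : (wl σ)[(i : ℕ)]? = (wl τ)[(i : ℕ)]? := by rw [h]
  rw [wl, wl, List.getElem?_map, List.getElem?_map, List.getElem?_eq_getElem hi] at h2
  simp only [Option.map_some, Option.some.injEq, List.getElem_finRange] at h2
  simpa using congrArg Fin.val h2

/-- The comparison map from the group algebra to the free algebra. -/
def Ψ : MonoidAlgebra F (Equiv.Perm (Fin n)) →ₗ[F] FA F n :=
  Finsupp.lift (FA F n) F (Equiv.Perm (Fin n)) (fun σ => wd (wl σ)) ∘ₗ
    (MonoidAlgebra.coeffLinearEquiv F).toLinearMap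

lemma Ψ_single (σ : Equiv.Perm (Fin n)) (c : F) :
    Ψ (MonoidAlgebra.single σ c) = c • wd (wl σ) := by
  rw [Ψ, LinearMap.comp_apply, LinearEquiv.coe_coe, MonoidAlgebra.coeffLinearEquiv_apply,
    MonoidAlgebra.coeff_single]
  erw [Finsupp.lift_apply]
  exact Finsupp.sum_single_index (by simp)

lemma Ψ_eq_mapDomain (x : MonoidAlgebra F (Equiv.Perm (Fin n))) :
    Ψ x = MonoidAlgebra.mapDomain (fun σ => FreeMonoid.ofList (wl σ)) x := by
  induction x using MonoidAlgebra.induction_linear with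
  | zero => simp [map_zero, MonoidAlgebra.mapDomain_zero]
  | add f g hf hg => rw [map_add, MonoidAlgebra.mapDomain_add, hf, hg]
  | single a b =>
      rw [Ψ_single, MonoidAlgebra.mapDomain_single, wd, MonoidAlgebra.smul_single', mul_one]

lemma Ψ_injective : Function.Injective (Ψ (F := F) (n := n)) := by
  intro a b h
  rw [Ψ_eq_mapDomain, Ψ_eq_mapDomain] at h
  exact MonoidAlgebra.mapDomain_injective
    (fun σ τ hh => wl_injective (FreeMonoid.ofList.injective hh)) h

/-- move-to-front operation on lists -/
def mtf (m : ℕ) (l : List (Fin n)) : List (Fin n) :=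
  (l.drop m).take 1 ++ (l.take m ++ l.drop (m + 1))

/-- The key combinatorial lemma: the inverse cycle-range permutation rearranges
the list `finRange n` by moving position `j` to the front. -/
lemma cr_list {n : ℕ} (j : Fin n) :
    (List.finRange n).map ⇑(j.cycleRange)⁻¹ =
      ((List.finRange n).drop (j : ℕ)).take 1 ++
        ((List.finRange n).take (j : ℕ) ++ (List.finRange n).drop ((j : ℕ) + 1)) := by
  cases n with
  | zero => exact j.elim0
  | succ n =>
    have hj := j.2
    have hfr : ∀ (k : ℕ) (hk : k < n + 1),
        (List.finRange (n+1))[k]'(by simpa using hk) = ⟨k, hk⟩ := by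
      intro k hk
      simp [List.getElem_finRange, Fin.cast_mk]
    have hlen1 : (((List.finRange (n+1)).drop (j:ℕ)).take 1).length = 1 := by
      simp only [List.length_take, List.length_drop, List.length_finRange]; omega
    have hlenT : (((List.finRange (n+1)).take (j:ℕ))).length = (j:ℕ) := by
      simp only [List.length_take, List.length_finRange]; omega
    apply List.ext_getElem
    · simp only [List.length_map, List.length_finRange, List.length_append,
        List.length_take, List.length_drop]
      omega
    · intro i h₁ h₂
      simp only [List.length_map, List.length_finRange] at h₁
      rw [List.getElem_map]
      rcases Nat.eq_zero_or_pos i with hi0 | hipos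
      · subst hi0
        rw [List.getElem_append_left (by omega)]
        rw [List.getElem_take, List.getElem_drop, hfr 0 (by omega), hfr ((j:ℕ)+0) (by omega)]
        have hq : j.cycleRange⁻¹ (⟨0, by omega⟩ : Fin (n+1)) = j := by
          have h0 : (⟨0, by omega⟩ : Fin (n+1)) = 0 := rfl
          rw [h0, ← Fin.cycleRange_self j]
          exact Equiv.symm_apply_apply _ _
        rw [hq]
        apply Fin.ext
        simp
      · rw [List.getElem_append_right (by omega)]
        by_cases hij : i ≤ (j : ℕ)
        · -- middle region
          rw [List.getElem_append_left (by omega), List.getElem_take, hfr i h₁,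
            hfr (i - (((List.finRange (n+1)).drop (j:ℕ)).take 1).length) (by omega)]
          have hq : j.cycleRange⁻¹ (⟨i, h₁⟩ : Fin (n+1)) = ⟨i - 1, by omega⟩ := by
            have hcr : j.cycleRange ⟨i - 1, by omega⟩ = ⟨i, h₁⟩ := by
              have hlt : (⟨i - 1, by omega⟩ : Fin (n+1)) < j := by
                rw [Fin.lt_def]; simpa using (by omega : i - 1 < (j:ℕ))
              rw [Fin.cycleRange_of_lt hlt]
              apply Fin.ext
              rw [Fin.val_add_one_of_lt (by rw [Fin.lt_def]; simpa using (by omega : i - 1 < n))]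
              simp; omega
            rw [← hcr]
            exact Equiv.symm_apply_apply _ _
          rw [hq]
          apply Fin.ext
          simp only
          omega
        · -- high region
          rw [List.getElem_append_right (by omega), List.getElem_drop,
            hfr i h₁, hfr _ (by omega)]
          have hq : j.cycleRange⁻¹ (⟨i, h₁⟩ : Fin (n+1)) = ⟨i, h₁⟩ := by
            have hcr : j.cycleRange ⟨i, h₁⟩ = ⟨i, h₁⟩ :=
              Fin.cycleRange_of_gt (by rw [Fin.lt_def]; simpa using (by omega : (j:ℕ) < i))
            conv_lhs => rw [← hcr]
            exact Equiv.symm_apply_apply _ _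
          rw [hq]
          apply Fin.ext
          simp only
          omega

lemma wl_mul_cycle (σ : Equiv.Perm (Fin n)) (j : Fin n) :
    wl (σ * (j.cycleRange)⁻¹) = mtf (j : ℕ) (wl σ) := by
  have h1 : wl (σ * (j.cycleRange)⁻¹) = ((List.finRange n).map ⇑(j.cycleRange)⁻¹).map σ := by
    rw [wl, List.map_map]
    rfl
  rw [h1, cr_list, List.map_append, List.map_append, mtf, wl,
    List.map_take, List.map_drop, List.map_take, List.map_drop]

/-- The linear "move position `m` to front" operator on the free algebra. -/
def T (m : ℕ) : FA F n →ₗ[F] FA F n :=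
  Finsupp.lift (FA F n) F (FreeMonoid (Fin n)) (fun w => wd (mtf m (FreeMonoid.toList w))) ∘ₗ
    (MonoidAlgebra.coeffLinearEquiv F).toLinearMap

lemma T_single (m : ℕ) (w : FreeMonoid (Fin n)) (c : F) :
    T m (MonoidAlgebra.single w c) = c • wd (mtf m (FreeMonoid.toList w)) := by
  rw [T, LinearMap.comp_apply, LinearEquiv.coe_coe, MonoidAlgebra.coeffLinearEquiv_apply,
    MonoidAlgebra.coeff_single]
  erw [Finsupp.lift_apply]
  exact Finsupp.sum_single_index (by simp)

lemma T_wd (m : ℕ) (l : List (Fin n)) : T m (wd (F := F) l) = wd (mtf m l) := by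
  rw [wd, T_single, FreeMonoid.toList_ofList, one_smul]

lemma Ψ_mul_cycle (x : MonoidAlgebra F (Equiv.Perm (Fin n))) (j : Fin n) :
    Ψ (x * MonoidAlgebra.of F (Equiv.Perm (Fin n)) (j.cycleRange)⁻¹) = T (j : ℕ) (Ψ x) := by
  induction x using MonoidAlgebra.induction_linear with
  | zero => simp
  | add f g hf hg => rw [add_mul, map_add, hf, hg, map_add, map_add]
  | single σ c =>
      rw [MonoidAlgebra.of_apply]
      show Ψ (MonoidAlgebra.single σ c * MonoidAlgebra.single _ 1) = _
      rw [MonoidAlgebra.single_mul_single, mul_one, Ψ_single, Ψ_single, map_smul,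
        T_wd, wl_mul_cycle]

/-- span of words of length `m` -/
def Sm (m : ℕ) : Submodule F (FA F n) :=
  Submodule.span F {a | ∃ w : List (Fin n), w.length = m ∧ a = wd w}

/-- span of nonempty words -/
def Sp : Submodule F (FA F n) :=
  Submodule.span F {a | ∃ w : List (Fin n), w ≠ [] ∧ a = wd w}

lemma Sm_le_Sp {m : ℕ} (hm : 1 ≤ m) : Sm (F := F) (n := n) m ≤ Sp := by
  apply Submodule.span_le.2
  rintro a ⟨w, hw, rfl⟩
  exact Submodule.subset_span ⟨w, by rw [← hw] at hm; exact List.ne_nil_of_length_pos hm, rfl⟩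

lemma bracket_mem_Sm {m : ℕ} {u : FA F n} (hu : u ∈ Sm m) (x : Fin n) :
    u * yy x - yy x * u ∈ Sm (m + 1) := by
  induction hu using Submodule.span_induction with
  | mem a ha =>
      obtain ⟨w, hw, rfl⟩ := ha
      have h1 : wd (F := F) w * yy x = wd (w ++ [x]) := by rw [wd_append]; rfl
      have h2 : yy (F := F) x * wd w = wd (x :: w) := (wd_cons x w).symm
      rw [h1, h2]
      exact sub_mem (Submodule.subset_span ⟨w ++ [x], by simp [hw], rfl⟩)
        (Submodule.subset_span ⟨x :: w, by simp [hw], rfl⟩)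
  | zero => simp
  | add a b ha hb iha ihb =>
      have : (a + b) * yy x - yy x * (a + b) =
          (a * yy x - yy x * a) + (b * yy x - yy x * b) := by noncomm_ring
      rw [this]; exact add_mem iha ihb
  | smul c a ha iha =>
      have : (c • a) * yy x - yy x * (c • a) = c • (a * yy x - yy x * a) := by
        rw [smul_mul_assoc, mul_smul_comm, smul_sub]
      rw [this]; exact Submodule.smul_mem _ _ iha

lemma lb_mem {l : List (Fin n)} (hl : l ≠ []) : lb (F := F) l ∈ Sm l.length := by
  induction l using List.reverseRecOn with
  | nil => exact absurd rfl hl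
  | append_singleton l x ih =>
      rcases List.eq_nil_or_concat' l with rfl | ⟨l', y, rfl⟩
      · exact Submodule.subset_span ⟨[x], rfl, by simp [yy]⟩
      · rw [lb_concat (by simp) x]
        simpa using bracket_mem_Sm (ih (by simp)) x

lemma lb_mem' {l : List (Fin n)} (hl : l ≠ []) : lb (F := F) l ∈ Sp :=
  Sm_le_Sp (List.length_pos_iff.2 hl) (lb_mem hl)

lemma mul_mem_Sp_right {a : FA F n} (ha : a ∈ Sp) (b : FA F n) : a * b ∈ Sp := by
  induction ha using Submodule.span_induction with
  | mem u hu =>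
      obtain ⟨w, hw, rfl⟩ := hu
      induction b using MonoidAlgebra.induction_linear with
      | zero => simp
      | add f g hf hg => rw [mul_add]; exact add_mem hf hg
      | single w' c =>
          have : wd (F := F) w * MonoidAlgebra.single w' c = c • wd (w ++ FreeMonoid.toList w') := by
            rw [wd, wd, MonoidAlgebra.single_mul_single, one_mul, FreeMonoid.ofList_append,
              MonoidAlgebra.smul_single', mul_one]
            congr 1
          rw [this]
          exact Submodule.smul_mem _ _
            (Submodule.subset_span ⟨w ++ FreeMonoid.toList w', by simp [hw], rfl⟩)
  | zero => simp
  | add u v hu hv ihu ihv => rw [add_mul]; exact add_mem ihu ihv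
  | smul c u hu ihu => rw [smul_mul_assoc]; exact Submodule.smul_mem _ _ ihu

lemma mul_mem_Sp_left {a : FA F n} (ha : a ∈ Sp) (b : FA F n) : b * a ∈ Sp := by
  induction ha using Submodule.span_induction with
  | mem u hu =>
      obtain ⟨w, hw, rfl⟩ := hu
      induction b using MonoidAlgebra.induction_linear with
      | zero => simp
      | add f g hf hg => rw [add_mul]; exact add_mem hf hg
      | single w' c =>
          have : MonoidAlgebra.single w' c * wd (F := F) w = c • wd (FreeMonoid.toList w' ++ w) := by
            rw [wd, wd, MonoidAlgebra.single_mul_single, mul_one, FreeMonoid.ofList_append,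
              MonoidAlgebra.smul_single', mul_one]
            congr 1
          rw [this]
          exact Submodule.smul_mem _ _
            (Submodule.subset_span ⟨FreeMonoid.toList w' ++ w, by simp [hw], rfl⟩)
  | zero => simp
  | add u v hu hv ihu ihv => rw [mul_add]; exact add_mem ihu ihv
  | smul c u hu ihu => rw [mul_smul_comm]; exact Submodule.smul_mem _ _ ihu

lemma T_shift (m : ℕ) (x : Fin n) (r : List (Fin n)) {u : FA F n} (hu : u ∈ Sm m) :
    T m (u * wd (x :: r)) = yy x * u * wd r := by
  induction hu using Submodule.span_induction with
  | mem a ha =>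
      obtain ⟨w, hw, rfl⟩ := ha
      rw [← wd_append, T_wd]
      have hd : (w ++ x :: r).drop m = x :: r := List.drop_left' hw
      have ht : (w ++ x :: r).take m = w := List.take_left' hw
      have hd1 : (w ++ x :: r).drop (m + 1) = r := by
        have : w ++ x :: r = (w ++ [x]) ++ r := by simp
        rw [this]
        exact List.drop_left' (by simp [hw])
      rw [mtf, hd, ht, hd1]
      have : (x :: r).take 1 = [x] := by simp
      rw [this]
      rw [show ([x] ++ (w ++ r) : List (Fin n)) = x :: (w ++ r) from rfl, wd_cons, wd_append,
        ← mul_assoc]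
  | zero => simp
  | add a b ha hb iha ihb =>
      rw [add_mul, map_add, iha, ihb, mul_add, add_mul]
  | smul c a ha iha =>
      rw [smul_mul_assoc, map_smul, iha, mul_smul_comm, smul_mul_assoc]

lemma DD_mul_letter {a : FA F n} (ha : a ∈ Sp) (x : Fin n) :
    DD (a * yy x) = DD a * yy x - yy x * DD a := by
  induction ha using Submodule.span_induction with
  | mem u hu =>
      obtain ⟨w, hw, rfl⟩ := hu
      have h1 : wd (F := F) w * yy x = wd (w ++ [x]) := by rw [wd_append]; rfl
      rw [h1, DD_wd, DD_wd, lb_concat hw]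
  | zero => simp
  | add u v hu hv ihu ihv =>
      rw [add_mul, map_add, ihu, ihv, map_add]
      noncomm_ring
  | smul c u hu ihu =>
      rw [smul_mul_assoc, map_smul, ihu, map_smul]
      rw [smul_sub, smul_mul_assoc, mul_smul_comm]

lemma yy_mem_Sp (x : Fin n) : yy (F := F) x ∈ Sp := by
  apply Submodule.subset_span
  refine ⟨[x], by simp, ?_⟩
  rfl

lemma DD_yy (x : Fin n) : DD (yy (F := F) x) = yy x := by
  show DD (wd (F := F) [x]) = yy x
  rw [DD_wd, lb_singleton]

lemma DD_mul_lb (τ : Equiv.Perm (Fin n)) (m : ℕ) (hm : 1 ≤ m) :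
    m ≤ n → ∀ {a : FA F n}, a ∈ Sp →
      DD (a * lb ((wl τ).take m)) =
        DD a * lb ((wl τ).take m) - lb ((wl τ).take m) * DD a := by
  induction m, hm using Nat.le_induction with
  | base =>
      intro hn a ha
      have hlen : 0 < (wl τ).length := by simp; omega
      have h1 : (wl τ).take 1 = [(wl τ)[0]'hlen] := by
        rw [List.take_succ, List.getElem?_eq_getElem hlen]
        simp
      rw [h1, lb_singleton]
      exact DD_mul_letter ha _
  | succ m hm ih =>
      intro hmn a ha
      have hmlt : m < n := by omega
      have hlen : m < (wl τ).length := by simp; omega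
      have htk_ne : (wl τ).take m ≠ [] := by
        apply List.ne_nil_of_length_pos
        simp only [List.length_take, wl_length]
        omega
      have hsucc : (wl τ).take (m+1) = (wl τ).take m ++ [(wl τ)[m]'hlen] := by
        rw [List.take_succ, List.getElem?_eq_getElem hlen]
        simp
      set L := lb (F := F) ((wl τ).take m) with hL
      set w := (wl τ)[m]'hlen with hw
      rw [hsucc, lb_concat htk_ne]
      have h1 : DD (a * L) = DD a * L - L * DD a := ih hmlt.le ha
      have h2 : DD (a * yy w) = DD a * yy w - yy w * DD a := DD_mul_letter ha w
      have h3 : DD ((a * L) * yy w) = DD (a * L) * yy w - yy w * DD (a * L) :=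
        DD_mul_letter (mul_mem_Sp_right ha L) w
      have h4 : DD ((a * yy w) * L) = DD (a * yy w) * L - L * DD (a * yy w) :=
        ih hmlt.le (mul_mem_Sp_right ha (yy w))
      have e1 : a * (L * yy w - yy w * L) = (a * L) * yy w - (a * yy w) * L := by
        noncomm_ring
      rw [e1, map_sub, h3, h4, h1, h2]
      noncomm_ring

lemma DD_lb_take (τ : Equiv.Perm (Fin n)) (m : ℕ) (hm : 1 ≤ m) :
    m ≤ n → DD (lb (F := F) ((wl τ).take m)) = (m : F) • lb (F := F) ((wl τ).take m) := by
  induction m, hm using Nat.le_induction with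
  | base =>
      intro hn
      have hlen : 0 < (wl τ).length := by simp; omega
      have h1 : (wl τ).take 1 = [(wl τ)[0]'hlen] := by
        rw [List.take_succ, List.getElem?_eq_getElem hlen]
        simp
      rw [h1, lb_singleton, DD_yy, Nat.cast_one, one_smul]
  | succ m hm ih =>
      intro hmn
      have hmlt : m < n := by omega
      have hlen : m < (wl τ).length := by simp; omega
      have htk_ne : (wl τ).take m ≠ [] := by
        apply List.ne_nil_of_length_pos
        simp only [List.length_take, wl_length]
        omega
      have hsucc : (wl τ).take (m+1) = (wl τ).take m ++ [(wl τ)[m]'hlen] := by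
        rw [List.take_succ, List.getElem?_eq_getElem hlen]
        simp
      set L := lb (F := F) ((wl τ).take m) with hL
      set w := (wl τ)[m]'hlen with hw
      rw [hsucc, lb_concat htk_ne]
      have h1 : DD (L * yy w) = DD L * yy w - yy w * DD L :=
        DD_mul_letter (lb_mem' htk_ne) w
      have h2 : DD (yy w * L) = DD (yy w) * L - L * DD (yy w) :=
        DD_mul_lb τ m hm hmlt.le (yy_mem_Sp w)
      rw [map_sub, h1, h2, DD_yy, ih hmlt.le]
      rw [smul_mul_assoc, mul_smul_comm]
      have hc : ((m + 1 : ℕ) : F) = (m : F) + 1 := by push_cast; ring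
      rw [hc, add_smul, one_smul, smul_sub]
      abel

lemma dswPartial_one : dswPartial F n 1 = 1 := by
  have h : ((List.finRange n).take 1).tail = [] := by
    cases (List.finRange n) <;> simp
  rw [dswPartial, h]
  simp

lemma dswPartial_succ {m : ℕ} (hm : 1 ≤ m) (h : m < n) :
    dswPartial F n (m + 1) = dswPartial F n m *
      (1 - MonoidAlgebra.of F (Equiv.Perm (Fin n)) ((Fin.cycleRange ⟨m, h⟩)⁻¹)) := by
  have hlen : m < (List.finRange n).length := by simpa using h
  have h1 : (List.finRange n).take (m + 1) = (List.finRange n).take m ++ [⟨m, h⟩] := by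
    rw [List.take_succ, List.getElem?_eq_getElem hlen]
    simp [List.getElem_finRange]
  have htk_ne : (List.finRange n).take m ≠ [] := by
    apply List.ne_nil_of_length_pos
    simp only [List.length_take, List.length_finRange]
    omega
  have h2 : ((List.finRange n).take m ++ [(⟨m, h⟩ : Fin n)]).tail =
      ((List.finRange n).take m).tail ++ [⟨m, h⟩] := by
    obtain ⟨a, l, hal⟩ := List.exists_cons_of_ne_nil htk_ne
    rw [hal]
    simp
  rw [dswPartial, dswPartial, h1, h2, List.map_append, List.prod_append]
  simp

lemma Ψ_single_dswPartial (τ : Equiv.Perm (Fin n)) (m : ℕ) (hm : 1 ≤ m) :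
    m ≤ n →
      Ψ (MonoidAlgebra.single τ 1 * dswPartial F n m) =
        lb ((wl τ).take m) * wd ((wl τ).drop m) := by
  induction m, hm using Nat.le_induction with
  | base =>
      intro hn
      have hlen : 0 < (wl τ).length := by simp; omega
      have h1 : (wl τ).take 1 = [(wl τ)[0]'hlen] := by
        rw [List.take_succ, List.getElem?_eq_getElem hlen]
        simp
      rw [dswPartial_one, mul_one, Ψ_single, one_smul, h1, lb_singleton]
      rw [show yy (F := F) ((wl τ)[0]'hlen) = wd [(wl τ)[0]'hlen] from rfl, ← wd_append, ← h1,
        List.take_append_drop]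
  | succ m hm ih =>
      intro hmn
      have hmlt : m < n := by omega
      have hlen : m < (wl τ).length := by simp; omega
      have htk_ne : (wl τ).take m ≠ [] := by
        apply List.ne_nil_of_length_pos
        simp only [List.length_take, wl_length]
        omega
      have htklen : ((wl τ).take m).length = m := by
        simp only [List.length_take, wl_length]
        omega
      have hsucc : (wl τ).take (m+1) = (wl τ).take m ++ [(wl τ)[m]'hlen] := by
        rw [List.take_succ, List.getElem?_eq_getElem hlen]
        simp
      have hdrop : (wl τ).drop m = (wl τ)[m]'hlen :: (wl τ).drop (m+1) :=
        List.drop_eq_getElem_cons hlen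
      rw [dswPartial_succ hm hmlt, ← mul_assoc, mul_sub, mul_one, map_sub]
      have hcyc : Ψ (MonoidAlgebra.single τ 1 * dswPartial F n m *
          MonoidAlgebra.of F (Equiv.Perm (Fin n)) ((Fin.cycleRange ⟨m, hmlt⟩)⁻¹)) =
          T m (Ψ (MonoidAlgebra.single τ 1 * dswPartial F n m)) := by
        have := Ψ_mul_cycle (MonoidAlgebra.single τ 1 * dswPartial F n m) (⟨m, hmlt⟩ : Fin n)
        simpa using this
      rw [hcyc, ih hmlt.le]
      have hmem : lb (F := F) ((wl τ).take m) ∈ Sm m := by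
        have h := lb_mem (F := F) htk_ne
        rwa [htklen] at h
      rw [hdrop, T_shift m _ _ hmem]
      rw [hsucc, lb_concat htk_ne, wd_cons]
      noncomm_ring

lemma Ψ_mul_dsw (hn : 1 ≤ n) (x : MonoidAlgebra F (Equiv.Perm (Fin n))) :
    Ψ (x * dsw F n) = DD (Ψ x) := by
  induction x using MonoidAlgebra.induction_linear with
  | zero => simp
  | add f g hf hg => rw [add_mul, map_add, hf, hg, map_add, map_add]
  | single τ c =>
      show Ψ (MonoidAlgebra.single τ c * dsw F n) = DD (Ψ (MonoidAlgebra.single τ c))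
      have hc : MonoidAlgebra.single τ c = c • MonoidAlgebra.single τ (1 : F) := by
        rw [MonoidAlgebra.smul_single', mul_one]
      rw [hc, smul_mul_assoc, map_smul, map_smul, map_smul]
      congr 1
      have htk : (wl τ).take n = wl τ := List.take_of_length_le (by simp)
      have hdp : (wl τ).drop n = [] := List.drop_eq_nil_of_le (by simp)
      rw [dsw, Ψ_single_dswPartial τ n hn le_rfl, htk, hdp, wd_nil, mul_one, Ψ_single,
        one_smul, DD_wd]

lemma Ψ_dsw (hn : 1 ≤ n) : Ψ (dsw F n) = lb (F := F) (wl (1 : Equiv.Perm (Fin n))) := by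
  have h1 : (dsw F n : MonoidAlgebra F (Equiv.Perm (Fin n))) = 1 * dsw F n := (one_mul _).symm
  rw [h1, show (1 : MonoidAlgebra F (Equiv.Perm (Fin n))) =
      MonoidAlgebra.single 1 1 from MonoidAlgebra.one_def, Ψ_mul_dsw hn, Ψ_single, one_smul,
    DD_wd]

end

end DSWAux

/-- For every `n ≥ 1` and every field `F`, the Dynkin–Specht–Wever element satisfies
`ω_n² = n·ω_n` in the group algebra `F𝔖_n`. -/
theorem dsw_mul_self (F : Type*) [Field F] (n : ℕ) (hn : 1 ≤ n) :
    dsw F n * dsw F n = (n : F) • dsw F n := by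
  apply DSWAux.Ψ_injective
  have htk : (DSWAux.wl (1 : Equiv.Perm (Fin n))).take n = DSWAux.wl 1 :=
    List.take_of_length_le (by simp [DSWAux.wl])
  rw [DSWAux.Ψ_mul_dsw hn, DSWAux.Ψ_dsw hn, map_smul, DSWAux.Ψ_dsw hn]
  have hD := DSWAux.DD_lb_take (F := F) (n := n) 1 n hn le_rfl
  rw [htk] at hD
  exact hD
end

section
/- For every n ≥ 2 and every field F, one has ω_{n−1}·c_n·ω_n = −ω_n in the group algebra F𝔖_n, where ω_{n−1} is regarded as an element of F𝔖_n via the natural embedding 𝔖_{n−1} ≤ 𝔖_n. -/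
section DSWAux

variable (F : Type*) [Field F] (n : ℕ)

/-- The word algebra: the monoid algebra of the free monoid, i.e. the free associative
algebra with basis all words in the letters `Fin n`. -/
abbrev WA := MonoidAlgebra F (FreeMonoid (Fin n))

variable {n}

/-- A single word, as an element of the word algebra. -/
noncomputable def wrd (l : List (Fin n)) : WA F n :=
  MonoidAlgebra.of F (FreeMonoid (Fin n)) (FreeMonoid.ofList l)

/-- A single letter, as an element of the word algebra. -/
noncomputable def ltr (a : Fin n) : WA F n := wrd F [a]

/-- Left-normed bracketing `[[…[l₀,l₁],…],l_k]` of a list of letters. -/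
noncomputable def brk : List (Fin n) → WA F n
  | [] => 1
  | a :: t => t.foldl (fun z b => z * ltr F b - ltr F b * z) (ltr F a)

/-- The span of the words of length `k`. -/
noncomputable def Wk (k : ℕ) : Submodule F (WA F n) :=
  Submodule.span F {x | ∃ u : List (Fin n), u.length = k ∧ x = wrd F u}

variable {F}

lemma wrd_nil : wrd F ([] : List (Fin n)) = 1 := rfl

lemma wrd_append (u v : List (Fin n)) : wrd F (u ++ v) = wrd F u * wrd F v := by
  rw [wrd, FreeMonoid.ofList_append, map_mul]; rfl

lemma wrd_cons (a : Fin n) (v : List (Fin n)) : wrd F (a :: v) = ltr F a * wrd F v := by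
  rw [show (a :: v) = [a] ++ v from rfl, wrd_append]; rfl

lemma brk_singleton (a : Fin n) : brk F [a] = ltr F a := rfl

lemma ltr_def (a : Fin n) : ltr F a = wrd F [a] := rfl

lemma brk_concat (a : Fin n) {l : List (Fin n)} (hl : l ≠ []) :
    brk F (l ++ [a]) = brk F l * ltr F a - ltr F a * brk F l := by
  obtain ⟨b, t, rfl⟩ := List.exists_cons_of_ne_nil hl
  show (t ++ [a]).foldl _ _ = _
  rw [List.foldl_append]
  rfl

lemma wrd_mem_Wk {u : List (Fin n)} {k : ℕ} (h : u.length = k) : wrd F u ∈ Wk F k :=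
  Submodule.subset_span ⟨u, h, rfl⟩

lemma Wk_mul {k k' : ℕ} {z z' : WA F n} (hz : z ∈ Wk F k) (hz' : z' ∈ Wk F k') :
    z * z' ∈ Wk F (k + k') := by
  induction hz using Submodule.span_induction with
  | mem x hx =>
    obtain ⟨u, hu, rfl⟩ := hx
    induction hz' using Submodule.span_induction with
    | mem y hy =>
      obtain ⟨v, hv, rfl⟩ := hy
      rw [← wrd_append]
      exact wrd_mem_Wk (by simp [hu, hv])
    | zero => rw [mul_zero]; exact zero_mem _
    | add a b _ _ ha hb => rw [mul_add]; exact add_mem ha hb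
    | smul r a _ ha => rw [mul_smul_comm]; exact Submodule.smul_mem _ _ ha
  | zero => rw [zero_mul]; exact zero_mem _
  | add a b _ _ ha hb => rw [add_mul]; exact add_mem ha hb
  | smul r a _ ha => rw [smul_mul_assoc]; exact Submodule.smul_mem _ _ ha

lemma ltr_mem_Wk (a : Fin n) : ltr F a ∈ Wk F 1 := wrd_mem_Wk rfl

lemma brk_mem_Wk (l : List (Fin n)) : brk F l ∈ Wk F l.length := by
  induction l using List.reverseRecOn with
  | nil => exact wrd_mem_Wk (u := []) rfl
  | append_singleton l a ih =>
    rcases eq_or_ne l [] with rfl | hl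
    · exact wrd_mem_Wk rfl
    · rw [brk_concat a hl]
      have h1 := Wk_mul ih (ltr_mem_Wk (F := F) a)
      have h2 := Wk_mul (ltr_mem_Wk (F := F) a) ih
      rw [add_comm] at h2
      simpa using sub_mem h1 h2

/-- The word of a permutation. -/
def wordOf (σ : Equiv.Perm (Fin n)) : FreeMonoid (Fin n) :=
  FreeMonoid.ofList ((List.finRange n).map σ)

lemma wordOf_injective : Function.Injective (wordOf (n := n)) := by
  intro σ τ h
  have h' : (List.finRange n).map σ = (List.finRange n).map τ := h
  rw [List.map_inj_left] at h'
  exact Equiv.ext fun i => h' i (List.mem_finRange i)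

/-- The place-permutation action on words of length `n`. -/
def act (g : Equiv.Perm (Fin n)) (l : List (Fin n)) : List (Fin n) :=
  (List.finRange n).map (fun i => l.getD (g i).val (g i))

variable (F)

/-- The linear map sending a permutation `σ` to the word `σ(1) σ(2) ⋯ σ(n)`. -/
noncomputable def Phi :
    MonoidAlgebra F (Equiv.Perm (Fin n)) →ₗ[F] MonoidAlgebra F (FreeMonoid (Fin n)) :=
  MonoidAlgebra.mapDomainLinearMap F F wordOf

/-- The place-permutation action on the word algebra. -/
noncomputable def Tg (g : Equiv.Perm (Fin n)) :
    MonoidAlgebra F (FreeMonoid (Fin n)) →ₗ[F] MonoidAlgebra F (FreeMonoid (Fin n)) :=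
  MonoidAlgebra.mapDomainLinearMap F F (fun w => FreeMonoid.ofList (act g (FreeMonoid.toList w)))

/-- Bracketing of the first `m` letters of a word. -/
noncomputable def bword (m : ℕ) (l : FreeMonoid (Fin n)) : WA F n :=
  brk F ((FreeMonoid.toList l).take m) * wrd F ((FreeMonoid.toList l).drop m)

/-- The linear extension of `bword m` to the word algebra. -/
noncomputable def bb (m : ℕ) : WA F n →ₗ[F] WA F n :=
  Finsupp.linearCombination F (bword F m) ∘ₗ (MonoidAlgebra.coeffLinearEquiv F).toLinearMap

variable {F}

lemma Phi_single (σ : Equiv.Perm (Fin n)) (r : F) :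
    Phi F (MonoidAlgebra.single σ r) = MonoidAlgebra.single (wordOf σ) r := by
  exact MonoidAlgebra.mapDomainLinearMap_single _ _ _

lemma Tg_single (g : Equiv.Perm (Fin n)) (w : FreeMonoid (Fin n)) (r : F) :
    Tg F g (MonoidAlgebra.single w r)
      = MonoidAlgebra.single (FreeMonoid.ofList (act g (FreeMonoid.toList w))) r := by
  exact MonoidAlgebra.mapDomainLinearMap_single _ _ _

lemma bb_single (m : ℕ) (w : FreeMonoid (Fin n)) (r : F) :
    bb F m (MonoidAlgebra.single w r) = r • bword F m w :=
  Finsupp.linearCombination_single _ _ _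

lemma act_wordOf (g σ : Equiv.Perm (Fin n)) :
    act g (FreeMonoid.toList (wordOf σ)) = (List.finRange n).map (σ * g) := by
  unfold act wordOf
  refine List.map_congr_left fun i _ => ?_
  have hlen : ((List.finRange n).map σ).length = n := by simp
  rw [List.getD_eq_getElem _ _ (by simp [hlen])]
  simp [Equiv.Perm.mul_apply]

lemma Phi_mul_of (x : MonoidAlgebra F (Equiv.Perm (Fin n))) (g : Equiv.Perm (Fin n)) :
    Phi F (x * MonoidAlgebra.of F _ g) = Tg F g (Phi F x) := by
  induction x using MonoidAlgebra.induction_linear with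
  | zero => simp
  | add a b ha hb => rw [add_mul, map_add, ha, hb, map_add, map_add]
  | single σ r =>
    have h1 : MonoidAlgebra.single σ r * MonoidAlgebra.of F _ g
        = MonoidAlgebra.single (σ * g) r := by
      rw [MonoidAlgebra.of_apply]
      exact (MonoidAlgebra.single_mul_single _ _ _ _).trans (by rw [mul_one])
    rw [h1, Phi_single, Phi_single, Tg_single, act_wordOf]
    rfl

lemma cycInv_val {N : ℕ} (i x : Fin (N + 1)) :
    (((Fin.cycleRange i)⁻¹) x).val
      = if x.val = 0 then i.val else if x.val ≤ i.val then x.val - 1 else x.val := by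
  have hxy : Fin.cycleRange i ((Fin.cycleRange i)⁻¹ x) = x := Equiv.apply_symm_apply _ _
  rcases lt_trichotomy ((Fin.cycleRange i)⁻¹ x) i with h | h | h
  · have hx := Fin.coe_cycleRange_of_lt h
    rw [hxy] at hx
    have hyi : ((Fin.cycleRange i)⁻¹ x).val < i.val := h
    rw [if_neg (by omega), if_pos (by omega)]
    omega
  · have hx : x = 0 := by rw [h] at hxy; rw [← hxy]; exact Fin.cycleRange_self i
    rw [if_pos (by rw [hx]; rfl)]
    exact congrArg Fin.val h
  · have hx := Fin.cycleRange_of_gt h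
    rw [hxy] at hx
    have hyi : i.val < ((Fin.cycleRange i)⁻¹ x).val := h
    rw [← hx] at hyi ⊢
    rw [if_neg (by omega), if_neg (by omega)]

lemma act_core {m : ℕ} (hm : m < n) (u : List (Fin n)) (hu : u.length = m) (a : Fin n)
    (v : List (Fin n)) (hlen : m + (v.length + 1) = n) :
    act ((Fin.cycleRange (⟨m, hm⟩ : Fin n))⁻¹) (u ++ a :: v) = a :: (u ++ v) := by
  obtain ⟨N, rfl⟩ : ∃ N, n = N + 1 := ⟨n - 1, by omega⟩
  apply List.ext_getElem
  · simp [act]; omega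
  intro i h1 h2
  have hiN : i < N + 1 := by simpa [act] using h1
  have h2' : i < (a :: (u ++ v)).length := h2
  simp only [act, List.getElem_map]
  have hfr : (List.finRange (N + 1))[i]'(by simpa using hiN) = ⟨i, hiN⟩ := by
    simp [List.getElem_finRange, Fin.ext_iff]
  rw [hfr, ← List.getD_eq_getElem (a :: (u ++ v))
      ((Fin.cycleRange (⟨m, hm⟩ : Fin (N + 1)))⁻¹ ⟨i, hiN⟩) h2',
    cycInv_val]
  simp only []
  rcases Nat.eq_zero_or_pos i with hi0 | hipos
  · subst hi0
    rw [if_pos rfl, List.getD_append_right u (a :: v) _ m (by omega), List.getD_cons_zero]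
    · rw [hu, Nat.sub_self, List.getD_cons_zero]
  · obtain ⟨i', rfl⟩ : ∃ i', i = i' + 1 := ⟨i - 1, by omega⟩
    rw [if_neg (by omega), List.getD_cons_succ]
    rcases le_or_gt (i' + 1) m with him | him
    · rw [if_pos him, show i' + 1 - 1 = i' from by omega,
        List.getD_append _ _ _ _ (by omega), List.getD_append _ _ _ _ (by omega)]
    · rw [if_neg (by omega),
        List.getD_append_right _ _ _ _ (by omega), List.getD_append_right _ _ _ _ (by omega),
        hu, show i' + 1 - m = (i' - m) + 1 from by omega, List.getD_cons_succ]

lemma bword_of_le (m : ℕ) (l : List (Fin n)) (h : l.length ≤ m) :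
    bword F m (FreeMonoid.ofList l) = brk F l := by
  unfold bword
  rw [show FreeMonoid.toList (FreeMonoid.ofList l) = l from rfl,
    List.take_of_length_le h, List.drop_of_length_le h, wrd_nil, mul_one]

lemma wrd_eq_single (l : List (Fin n)) :
    wrd F l = MonoidAlgebra.single (FreeMonoid.ofList l) (1 : F) := rfl

lemma bb_wrd (m : ℕ) (l : List (Fin n)) (h : l.length ≤ m) :
    bb F m (wrd F l) = brk F l := by
  rw [wrd_eq_single, bb_single, bword_of_le m l h, one_smul]

/-- Key intertwining: the place-permutation by the cycle moves the letter at position `m`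
to the front. -/
lemma Tg_cycle {m : ℕ} (hm : m < n) (a : Fin n) (v : List (Fin n))
    (hlen : m + (v.length + 1) = n) {z : WA F n} (hz : z ∈ Wk F m) :
    Tg F (Fin.cycleRange (⟨m, hm⟩ : Fin n))⁻¹ (z * wrd F (a :: v))
      = ltr F a * z * wrd F v := by
  induction hz using Submodule.span_induction with
  | mem x hx =>
    obtain ⟨u, hu, rfl⟩ := hx
    rw [← wrd_append, wrd_eq_single, Tg_single,
      show FreeMonoid.toList (FreeMonoid.ofList (u ++ a :: v)) = u ++ a :: v from rfl,
      act_core hm u hu a v hlen, ← wrd_eq_single, wrd_cons, wrd_append, mul_assoc]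
  | zero => simp
  | add y y' _ _ hy hy' =>
    rw [add_mul, map_add, hy, hy']
    noncomm_ring
  | smul r y _ hy =>
    rw [smul_mul_assoc, map_smul, hy]
    simp [mul_smul_comm, smul_mul_assoc]

/-- Bracketing a product with a single letter. -/
lemma bb_mul_ltr {k : ℕ} (hk : 1 ≤ k) (hkn : k + 1 ≤ n) (a : Fin n) {z : WA F n}
    (hz : z ∈ Wk F k) :
    bb F n (z * ltr F a) = bb F n z * ltr F a - ltr F a * bb F n z := by
  induction hz using Submodule.span_induction with
  | mem x hx =>
    obtain ⟨u, hu, rfl⟩ := hx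
    have hune : u ≠ [] := by
      intro h; rw [h] at hu; simp at hu; omega
    rw [show wrd F u * ltr F a = wrd F (u ++ [a]) from (wrd_append u [a]).symm,
      bb_wrd n _ (by simp; omega), bb_wrd n _ (by omega), brk_concat a hune]
  | zero => simp
  | add y y' _ _ hy hy' => rw [add_mul, map_add, map_add, hy, hy']; noncomm_ring
  | smul r y _ hy =>
    rw [smul_mul_assoc, map_smul, map_smul, hy, smul_sub, smul_mul_assoc, mul_smul_comm]

/-- The key Lie-theoretic lemma (Dynkin–Specht–Wever style): bracketing against
a left-normed Lie monomial acts as the adjoint action. -/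
lemma bb_mul_brk : ∀ (l : List (Fin n)), l ≠ [] → ∀ (k : ℕ), 1 ≤ k → k + l.length ≤ n →
    ∀ {z : WA F n}, z ∈ Wk F k →
    bb F n (z * brk F l) = bb F n z * brk F l - brk F l * bb F n z := by
  intro l
  induction l using List.reverseRecOn with
  | nil => intro h; cases h rfl
  | append_singleton l' a ih =>
    intro _ k hk hsum z hz
    rcases eq_or_ne l' [] with rfl | hne'
    · rw [show ([] ++ [a]) = [a] from rfl, brk_singleton]
      exact bb_mul_ltr hk (by simpa using hsum) a hz
    · have hl' : 1 ≤ l'.length := List.length_pos_iff.mpr hne'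
      have hll : (l' ++ [a]).length = l'.length + 1 := by simp
      rw [hll] at hsum
      have h1 : z * brk F l' ∈ Wk F (k + l'.length) := Wk_mul hz (brk_mem_Wk l')
      have h2 : z * ltr F a ∈ Wk F (k + 1) := Wk_mul hz (ltr_mem_Wk a)
      have e1 : bb F n (z * brk F l') = bb F n z * brk F l' - brk F l' * bb F n z :=
        ih hne' k hk (by omega) hz
      have e2 : bb F n (z * ltr F a) = bb F n z * ltr F a - ltr F a * bb F n z :=
        bb_mul_ltr hk (by omega) a hz
      have e3 : bb F n ((z * brk F l') * ltr F a)
          = bb F n (z * brk F l') * ltr F a - ltr F a * bb F n (z * brk F l') :=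
        bb_mul_ltr (k := k + l'.length) (by omega) (by omega) a h1
      have e4 : bb F n ((z * ltr F a) * brk F l')
          = bb F n (z * ltr F a) * brk F l' - brk F l' * bb F n (z * ltr F a) :=
        ih hne' (k + 1) (by omega) (by omega) h2
      rw [brk_concat a hne', mul_sub, ← mul_assoc, ← mul_assoc, map_sub, e3, e4, e1, e2]
      noncomm_ring

lemma dswPartial_one : dswPartial F n 1 = 1 := by
  unfold dswPartial
  have h : ((List.finRange n).take 1).tail = [] := by
    rcases List.finRange n with _ | ⟨a, t⟩ <;> rfl
  rw [h]
  rfl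

lemma dswPartial_succ {m : ℕ} (h1 : 1 ≤ m) (h2 : m < n) :
    dswPartial F n (m + 1) = dswPartial F n m *
      (1 - MonoidAlgebra.of F (Equiv.Perm (Fin n)) (Fin.cycleRange (⟨m, h2⟩ : Fin n))⁻¹) := by
  unfold dswPartial
  have hmlen : m < (List.finRange n).length := by simpa using h2
  have htake : (List.finRange n).take (m + 1)
      = (List.finRange n).take m ++ [⟨m, h2⟩] := by
    rw [List.take_succ, List.getElem?_eq_getElem hmlen]
    simp [List.getElem_finRange, Fin.ext_iff]
  have hne : (List.finRange n).take m ≠ [] := by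
    intro h
    have := congrArg List.length h
    simp at this
    omega
  rw [htake, List.tail_append_of_ne_nil hne, List.map_append, List.prod_append]
  simp

/-- The main structure theorem: right multiplication by `dswPartial F n m` corresponds,
on the word side, to bracketing the first `m` letters. -/
lemma Phi_dswPartial (m : ℕ) (h1 : 1 ≤ m) (h2 : m ≤ n)
    (x : MonoidAlgebra F (Equiv.Perm (Fin n))) :
    Phi F (x * dswPartial F n m) = bb F m (Phi F x) := by
  induction m, h1 using Nat.le_induction with
  | base =>
    rw [dswPartial_one, mul_one]
    induction x using MonoidAlgebra.induction_linear with
    | zero => simp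
    | add a b ha hb => rw [map_add, map_add, ← ha, ← hb]
    | single σ r =>
      rw [Phi_single, bb_single]
      rcases hW : (List.finRange n).map σ with _ | ⟨b, t⟩
      · exfalso
        have := congrArg List.length hW
        simp at this
        omega
      · rw [show wordOf σ = FreeMonoid.ofList (b :: t) from by rw [wordOf, hW]]
        rw [show bword F 1 (FreeMonoid.ofList (b :: t)) = brk F [b] * wrd F t from rfl,
          brk_singleton, ← wrd_cons, wrd_eq_single, MonoidAlgebra.smul_single, smul_eq_mul, mul_one]
  | succ m hm ihm =>
    have hmn : m < n := by omega
    rw [dswPartial_succ hm hmn, ← mul_assoc, mul_sub, mul_one, map_sub, Phi_mul_of,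
      ihm (by omega)]
    clear ihm
    induction x using MonoidAlgebra.induction_linear with
    | zero => simp
    | add a b ha hb => simp only [map_add]; rw [← ha, ← hb]; abel
    | single σ r =>
      rw [Phi_single, bb_single, bb_single, map_smul]
      rw [← smul_sub]
      congr 1
      -- now a statement about the single word W = (finRange n).map σ
      set W : List (Fin n) := (List.finRange n).map σ with hWdef
      have hWlen : W.length = n := by simp [hWdef]
      have hmW : m < W.length := by omega
      have htake : W.take (m + 1) = W.take m ++ [W[m]] := by
        rw [List.take_succ, List.getElem?_eq_getElem hmW]
        rfl
      have hdrop : W.drop m = W[m] :: W.drop (m + 1) := (List.getElem_cons_drop hmW).symm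
      have htne : W.take m ≠ [] := by
        intro h
        have h0 : (W.take m).length = 0 := by rw [h]; rfl
        rw [List.length_take, hWlen] at h0
        omega
      have htlen : (W.take m).length = m := by rw [List.length_take, hWlen]; omega
      have hbrk : brk F (W.take m) ∈ Wk F m := by
        have h := brk_mem_Wk (F := F) (W.take m)
        rwa [htlen] at h
      have hTg : Tg F (Fin.cycleRange (⟨m, hmn⟩ : Fin n))⁻¹
            (brk F (W.take m) * wrd F (W[m] :: W.drop (m + 1)))
          = ltr F W[m] * brk F (W.take m) * wrd F (W.drop (m + 1)) :=
        Tg_cycle hmn _ _ (by simp [hWlen]; omega) hbrk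
      show bword F m (wordOf σ) - Tg F _ (bword F m (wordOf σ)) = bword F (m + 1) (wordOf σ)
      have hwl : FreeMonoid.toList (wordOf σ) = W := rfl
      unfold bword
      rw [hwl]
      rw [show W.drop m = W[m] :: W.drop (m + 1) from hdrop, hTg, htake,
        brk_concat _ htne, wrd_cons]
      noncomm_ring



lemma Phi_injective : Function.Injective (Phi (n := n) F) := by
  have : ⇑(Phi (n := n) F) = MonoidAlgebra.mapDomain wordOf := rfl
  rw [this]
  exact MonoidAlgebra.mapDomain_injective wordOf_injective

lemma Phi_one : Phi F (1 : MonoidAlgebra F (Equiv.Perm (Fin n)))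
    = MonoidAlgebra.single (FreeMonoid.ofList (List.finRange n)) (1 : F) := by
  rw [MonoidAlgebra.one_def, Phi_single]
  congr 1
  unfold wordOf
  congr 1
  simp

end DSWAux

/-- For every `n ≥ 2` and every field `F`, one has `ω_{n−1}·c_n·ω_n = −ω_n` in `F𝔖_n`,
where `ω_{n-1}` is regarded as an element of `F𝔖_n` via the embedding `𝔖_{n−1} ≤ 𝔖_n`,
and `c_n` is the backward cycle `(n, n-1, …, 2, 1)`. -/
theorem dswPartial_cycle_mul (F : Type*) [Field F] (n : ℕ) (hn : 2 ≤ n) :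
    dswPartial F n (n - 1) *
      MonoidAlgebra.of F (Equiv.Perm (Fin n)) (Fin.cycleRange (⟨n - 1, by omega⟩ : Fin n))⁻¹ *
      dsw F n = - dsw F n := by
  classical
  apply Phi_injective (F := F) (n := n)
  set base : List (Fin n) := List.finRange n with hbase
  have hbaselen : base.length = n := by simp [hbase]
  have hlast : n - 1 < n := by omega
  set lastF : Fin n := ⟨n - 1, hlast⟩ with hlastF
  have htne : base.take (n - 1) ≠ [] := by
    intro h
    have h0 : (base.take (n - 1)).length = 0 := by rw [h]; rfl
    rw [List.length_take, hbaselen] at h0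
    omega
  have htlen : (base.take (n - 1)).length = n - 1 := by
    rw [List.length_take, hbaselen]; omega
  set Q : WA F n := brk F (base.take (n - 1)) with hQ
  have hQmem : Q ∈ Wk F (n - 1) := by
    have h := brk_mem_Wk (F := F) (base.take (n - 1))
    rwa [htlen] at h
  have hdrop : base.drop (n - 1) = [lastF] := by
    have h1 : base.drop (n - 1) = base[n - 1]'(by omega) :: base.drop (n - 1 + 1) :=
      (List.getElem_cons_drop (by omega : n - 1 < base.length)).symm
    rw [h1, show n - 1 + 1 = n from by omega, List.drop_of_length_le (by omega)]
    congr 1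
    simp [hbase, hlastF, List.getElem_finRange, Fin.ext_iff]
  have hbase_split : base = base.take (n - 1) ++ [lastF] := by
    conv_lhs => rw [← List.take_append_drop (n - 1) base]
    rw [hdrop]
  -- Φ of dsw
  have hPhi_dsw : Phi F (dsw F n) = brk F base := by
    rw [dsw, ← one_mul (dswPartial F n n), Phi_dswPartial n (by omega) le_rfl, Phi_one,
      bb_single, one_smul, bword_of_le n base (by omega)]
  -- Φ of ω_{n-1}
  have hPhi_omega : Phi F (dswPartial F n (n - 1)) = Q * wrd F [lastF] := by
    rw [← one_mul (dswPartial F n (n - 1)), Phi_dswPartial (n - 1) (by omega) (by omega),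
      Phi_one, bb_single, one_smul]
    unfold bword
    rw [show FreeMonoid.toList (FreeMonoid.ofList base) = base from rfl, hdrop, ← hQ]
  -- Φ of ω_{n-1} c_n
  have hPhi_oc : Phi F (dswPartial F n (n - 1) *
      MonoidAlgebra.of F (Equiv.Perm (Fin n)) (Fin.cycleRange lastF)⁻¹)
      = ltr F lastF * Q := by
    rw [Phi_mul_of, hPhi_omega, show wrd F [lastF] = wrd F (lastF :: []) from rfl,
      Tg_cycle hlast lastF [] (by simp; omega) hQmem, wrd_nil, mul_one]
  -- Φ of LHS
  have hmain : Phi F (dswPartial F n (n - 1) *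
        MonoidAlgebra.of F (Equiv.Perm (Fin n)) (Fin.cycleRange lastF)⁻¹ * dsw F n)
      = ltr F lastF * Q - Q * ltr F lastF := by
    rw [dsw, Phi_dswPartial n (by omega) le_rfl, hPhi_oc]
    have hltr : ltr F lastF ∈ Wk F 1 := ltr_mem_Wk lastF
    have hbl : bb F n (ltr F lastF) = ltr F lastF := by
      rw [ltr_def lastF, bb_wrd n [lastF] (by simp; omega)]
      exact brk_singleton lastF
    rw [bb_mul_brk (base.take (n - 1)) htne 1 le_rfl (by rw [htlen]; omega) hltr, hbl, ← hQ]
  rw [hmain, map_neg, hPhi_dsw]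
  rw [show brk F base = brk F (base.take (n - 1) ++ [lastF]) from by rw [← hbase_split],
    brk_concat lastF htne, ← hQ]
  abel
end

section
/- For every n ≥ 2 and every field F, the set {π·c_n·ω_n : π ∈ 𝔖_{n−1}} is an F-basis of the left ideal F𝔖_n·ω_n; in particular, dim_F(Lie_F(n)) = (n−1)!. -/
namespace DSWAux

open Equiv

/-- down-shift on the window `[a, a+w)`: `a ↦ a+w-1`, `k ↦ k-1` inside. -/
def dFun (a w k : ℕ) : ℕ := if k = a then a + (w - 1) else if a < k ∧ k < a + w then k - 1 else k

def dInv (a w k : ℕ) : ℕ :=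
  if k = a + (w - 1) ∧ a ≤ k then a else if a ≤ k ∧ k + 1 < a + w then k + 1 else k

/-- shift-up-by-`b` on the window `[0, b+m)`: `k ↦ k+b` for `k < m`, `k ↦ k-m` for `m ≤ k < b+m`. -/
def uFun (b m k : ℕ) : ℕ := if k < m then k + b else if k < b + m then k - m else k

def uInv (b m k : ℕ) : ℕ := if k < b then k + m else if k < b + m then k - b else k

lemma dFun_dInv (a w k : ℕ) : dInv a w (dFun a w k) = k := by
  simp only [dFun, dInv]; split_ifs <;> (try contradiction) <;> omega

lemma dInv_dFun (a w k : ℕ) : dFun a w (dInv a w k) = k := by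
  simp only [dFun, dInv]; split_ifs <;> (try contradiction) <;> omega

lemma uFun_uInv (b m k : ℕ) : uInv b m (uFun b m k) = k := by
  simp only [uFun, uInv]; split_ifs <;> (try contradiction) <;> omega

lemma uInv_uFun (b m k : ℕ) : uFun b m (uInv b m k) = k := by
  simp only [uFun, uInv]; split_ifs <;> (try contradiction) <;> omega

def dEquiv (a w : ℕ) : Equiv.Perm ℕ := ⟨dFun a w, dInv a w, dFun_dInv a w, dInv_dFun a w⟩

def uEquiv (b m : ℕ) : Equiv.Perm ℕ := ⟨uFun b m, uInv b m, uFun_uInv b m, uInv_uFun b m⟩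

/-- restrict a permutation of ℕ preserving `< n` to `Fin n`. -/
def finify {n : ℕ} (f : Equiv.Perm ℕ) (hf : ∀ k, k < n ↔ f k < n) : Equiv.Perm (Fin n) :=
  (Equiv.permCongr Fin.equivSubtype.symm) (Equiv.Perm.subtypePerm f (fun k => (hf k).symm))

lemma finify_val {n : ℕ} (f : Equiv.Perm ℕ) (hf : ∀ k, k < n ↔ f k < n) (x : Fin n) :
    ((finify f hf x : Fin n) : ℕ) = f (x : ℕ) := by
  simp [finify, Equiv.permCongr, Fin.equivSubtype, Equiv.Perm.subtypePerm]

lemma dFun_lt {a w n : ℕ} (h : a + w ≤ n) (k : ℕ) : k < n ↔ dFun a w k < n := by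
  simp only [dFun]; split_ifs <;> (try contradiction) <;> omega

lemma uFun_lt {b m n : ℕ} (h : b + m ≤ n) (k : ℕ) : k < n ↔ uFun b m k < n := by
  simp only [uFun]; split_ifs <;> (try contradiction) <;> omega

def dPerm (n a w : ℕ) : Equiv.Perm (Fin n) :=
  if h : a + w ≤ n then finify (dEquiv a w) (dFun_lt h) else 1

def uPerm (n b m : ℕ) : Equiv.Perm (Fin n) :=
  if h : b + m ≤ n then finify (uEquiv b m) (uFun_lt h) else 1

lemma dPerm_val {n a w : ℕ} (h : a + w ≤ n) (x : Fin n) :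
    ((dPerm n a w x : Fin n) : ℕ) = dFun a w (x : ℕ) := by
  rw [dPerm, dif_pos h]; exact finify_val _ _ x

lemma uPerm_val {n b m : ℕ} (h : b + m ≤ n) (x : Fin n) :
    ((uPerm n b m x : Fin n) : ℕ) = uFun b m (x : ℕ) := by
  rw [uPerm, dif_pos h]; exact finify_val _ _ x

section PermIdentities

variable {n b m : ℕ}

lemma perm_u_zero (h : b ≤ n) : uPerm n b 0 = 1 := by
  apply Equiv.ext; intro x; apply Fin.ext
  rw [uPerm_val (by omega)]
  have hx := x.isLt
  simp only [uFun]; split_ifs <;> simp <;> omega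

lemma perm_u_one (h : b + 1 ≤ n) : uPerm n b 1 = dPerm n 0 (b + 1) := by
  apply Equiv.ext; intro x; apply Fin.ext
  rw [uPerm_val (by omega), dPerm_val (by omega)]
  have hx := x.isLt
  simp only [uFun, dFun]; split_ifs <;> (try contradiction) <;> omega

-- (ii)  e * γ'' = γ'
lemma perm_ii (h : b + m + 1 ≤ n) :
    dPerm n b (m + 1) * uPerm n (b + 1) m = uPerm n b m := by
  apply Equiv.ext; intro x; apply Fin.ext
  rw [Equiv.Perm.mul_apply, dPerm_val (by omega), uPerm_val (by omega), uPerm_val (by omega)]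
  have hx := x.isLt
  simp only [dFun, uFun]; split_ifs <;> (try contradiction) <;> omega

-- (iv)  e * c₁ = cₘ
lemma perm_iv (h : b + m + 1 ≤ n) :
    dPerm n b (m + 1) * dPerm n 0 (b + 1) = dPerm n 0 (b + m + 1) := by
  apply Equiv.ext; intro x; apply Fin.ext
  rw [Equiv.Perm.mul_apply, dPerm_val (by omega), dPerm_val (by omega), dPerm_val (by omega)]
  have hx := x.isLt
  simp only [dFun]; split_ifs <;> (try contradiction) <;> omega

-- (iii*)  cₘ * γ'' = γ
lemma perm_iii (h : b + m + 1 ≤ n) :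
    dPerm n 0 (b + m + 1) * uPerm n (b + 1) m = uPerm n b (m + 1) := by
  apply Equiv.ext; intro x; apply Fin.ext
  rw [Equiv.Perm.mul_apply, dPerm_val (by omega), uPerm_val (by omega), uPerm_val (by omega)]
  have hx := x.isLt
  simp only [dFun, uFun]; split_ifs <;> (try contradiction) <;> omega

-- (v)  e * γ = γ' * cₘ
lemma perm_v (h : b + m + 1 ≤ n) :
    dPerm n b (m + 1) * uPerm n b (m + 1) = uPerm n b m * dPerm n 0 (b + m + 1) := by
  apply Equiv.ext; intro x; apply Fin.ext
  rw [Equiv.Perm.mul_apply, Equiv.Perm.mul_apply, dPerm_val (by omega), uPerm_val (by omega),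
    uPerm_val (by omega), dPerm_val (by omega)]
  have hx := x.isLt
  simp only [dFun, uFun]; split_ifs <;> (try contradiction) <;> omega

-- (vi)  conjugation: `down a w * down (a+1) s = down a s * down a w` for `s < w`.
lemma perm_vi {a w s : ℕ} (hs : s < w) (h : a + w ≤ n) :
    dPerm n a w * dPerm n (a + 1) s = dPerm n a s * dPerm n a w := by
  apply Equiv.ext; intro x; apply Fin.ext
  rw [Equiv.Perm.mul_apply, Equiv.Perm.mul_apply, dPerm_val (by omega), dPerm_val (by omega),
    dPerm_val (by omega), dPerm_val (by omega)]
  have hx := x.isLt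
  simp only [dFun]; split_ifs <;> (try contradiction) <;> omega

-- (vii) disjoint windows commute
lemma perm_vii {s : ℕ} (h : b + 1 + s ≤ n) :
    dPerm n 0 (b + 1) * dPerm n (b + 1) s = dPerm n (b + 1) s * dPerm n 0 (b + 1) := by
  apply Equiv.ext; intro x; apply Fin.ext
  rw [Equiv.Perm.mul_apply, Equiv.Perm.mul_apply, dPerm_val (by omega), dPerm_val (by omega),
    dPerm_val (by omega), dPerm_val (by omega)]
  have hx := x.isLt
  simp only [dFun]; split_ifs <;> (try contradiction) <;> omega

-- (ix)  d * (up 1 j) = 1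
lemma perm_ix {j : ℕ} (h : j + 1 ≤ n) :
    dPerm n 0 (j + 1) * uPerm n 1 j = 1 := by
  apply Equiv.ext; intro x; apply Fin.ext
  rw [Equiv.Perm.mul_apply, dPerm_val (by omega), uPerm_val (by omega)]
  have hx := x.isLt
  simp only [dFun, uFun, Equiv.Perm.one_apply]; split_ifs <;> (try contradiction) <;> omega

-- fixed points of dPerm
lemma dPerm_fix_lt {a w : ℕ} (h : a + w ≤ n) (x : Fin n) (hx : (x : ℕ) < a) :
    dPerm n a w x = x := by
  apply Fin.ext; rw [dPerm_val h]; simp only [dFun]; split_ifs <;> (try contradiction) <;> omega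

lemma dPerm_fix_ge {a w : ℕ} (h : a + w ≤ n) (x : Fin n) (hx : a + w ≤ (x : ℕ)) :
    dPerm n a w x = x := by
  apply Fin.ext; rw [dPerm_val h]; simp only [dFun]; split_ifs <;> (try contradiction) <;> omega

lemma dPerm_mem_window {a w : ℕ} (h : a + w ≤ n) (x : Fin n) (hx : (x : ℕ) < a + w)
    (hx2 : a ≤ (x : ℕ)) : a ≤ ((dPerm n a w x : Fin n) : ℕ) ∧ ((dPerm n a w x : Fin n) : ℕ) < a + w := by
  rw [dPerm_val h]; simp only [dFun]; split_ifs <;> (try contradiction) <;> omega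

-- commutation of `dPerm n 0 c` with any permutation fixing the window `[0, c)`
lemma dPerm_comm_of_fix {c : ℕ} (h : c ≤ n) (g : Equiv.Perm (Fin n))
    (hg : ∀ k : Fin n, (k : ℕ) < c → g k = k) :
    dPerm n 0 c * g = g * dPerm n 0 c := by
  have hg' : ∀ k : Fin n, c ≤ (k : ℕ) → c ≤ ((g k : Fin n) : ℕ) := by
    intro k hk
    by_contra hlt
    have := hg (g k) (by omega)
    have : g k = k := g.injective this
    omega
  apply Equiv.ext; intro x
  rcases lt_or_ge ((x : ℕ)) c with hx | hx
  · rw [Equiv.Perm.mul_apply, Equiv.Perm.mul_apply, hg x hx]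
    have hd : ((dPerm n 0 c x : Fin n) : ℕ) < c := by
      rw [dPerm_val (by omega)]; simp only [dFun]; split_ifs <;> (try contradiction) <;> omega
    rw [hg _ hd]
  · rw [Equiv.Perm.mul_apply, Equiv.Perm.mul_apply]
    rw [dPerm_fix_ge (by omega) x (by omega), dPerm_fix_ge (by omega) (g x) (by simpa using hg' x hx)]

-- dPerm n b w fixes all points < b
lemma dPerm_fixes_lt {a w : ℕ} (x : Fin n) (hx : (x : ℕ) < a) : dPerm n a w x = x := by
  by_cases h : a + w ≤ n
  · exact dPerm_fix_lt h x hx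
  · rw [dPerm, dif_neg h]; rfl

end PermIdentities

end DSWAux

namespace DSWAux

section Algebra

variable (F : Type*) [Field F] (n : ℕ)

local notation "𝓐" => MonoidAlgebra F (Equiv.Perm (Fin n))
local notation "oof" => MonoidAlgebra.of F (Equiv.Perm (Fin n))

noncomputable def Wm (b m : ℕ) : MonoidAlgebra F (Equiv.Perm (Fin n)) :=
  ((List.range' 2 (m - 1)).map (fun s => (1 : 𝓐) - oof (dPerm n b s))).prod

noncomputable def Dm (b m : ℕ) : MonoidAlgebra F (Equiv.Perm (Fin n)) :=
  ((List.range' (b + 1) m).map (fun w => (1 : 𝓐) - oof (dPerm n 0 w))).prod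

noncomputable def Vmod (b : ℕ) : Submodule F (MonoidAlgebra F (Equiv.Perm (Fin n))) :=
  Submodule.span F (oof '' {g | ∀ k : Fin n, (k : ℕ) < b → g k = k})

variable {F n}

lemma Wm_zero (b : ℕ) : Wm F n b 0 = 1 := by simp [Wm, List.range']

lemma Wm_one (b : ℕ) : Wm F n b 1 = 1 := by simp [Wm, List.range']

lemma Wm_succ {m : ℕ} (hm : 1 ≤ m) (b : ℕ) :
    Wm F n b (m + 1) = Wm F n b m * (1 - oof (dPerm n b (m + 1))) := by
  have h1 : m + 1 - 1 = (m - 1) + 1 := by omega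
  rw [Wm, h1, show List.range' 2 ((m-1)+1) = List.range' 2 (m-1) ++ [2 + (m-1)] by
    simpa using List.range'_concat (step := 1) (s := 2) (n := m-1)]
  rw [List.map_append, List.prod_append, show 2 + (m - 1) = m + 1 by omega]
  simp [Wm]

lemma Dm_concat (b m : ℕ) :
    Dm F n b (m + 1) = Dm F n b m * (1 - oof (dPerm n 0 (b + m + 1))) := by
  rw [Dm, show List.range' (b+1) (m+1) = List.range' (b+1) m ++ [(b+1) + m] by
    simpa using List.range'_concat (step := 1) (s := b+1) (n := m)]
  rw [List.map_append, List.prod_append, show b + 1 + m = b + m + 1 by omega]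
  simp [Dm]

lemma Dm_cons (b m : ℕ) :
    Dm F n b (m + 1) = (1 - oof (dPerm n 0 (b + 1))) * Dm F n (b + 1) m := by
  rw [Dm, show List.range' (b+1) (m+1) = (b+1) :: List.range' (b+2) m by
    simpa using List.range'_succ (step := 1) (s := b+1) (n := m)]
  simp [Dm]

lemma Dm_one_eq_Wm (m : ℕ) : Dm F n 1 m = Wm F n 0 (m + 1) := by
  rw [Dm, Wm, Nat.add_sub_cancel]

lemma Vmod_antitone {b b' : ℕ} (h : b ≤ b') : Vmod F n b' ≤ Vmod F n b := by
  apply Submodule.span_mono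
  apply Set.image_mono
  intro g hg k hk
  exact hg k (lt_of_lt_of_le hk h)

lemma of_mem_Vmod {b : ℕ} {g : Equiv.Perm (Fin n)} (hg : ∀ k : Fin n, (k : ℕ) < b → g k = k) :
    (oof g : 𝓐) ∈ Vmod F n b :=
  Submodule.subset_span ⟨g, hg, rfl⟩

lemma one_mem_Vmod (b : ℕ) : (1 : 𝓐) ∈ Vmod F n b := by
  have : (oof 1 : 𝓐) ∈ Vmod F n b := of_mem_Vmod (by intro k _; rfl)
  rwa [map_one] at this

lemma zero_mem_Vmod (b : ℕ) : (0 : 𝓐) ∈ Vmod F n b := zero_mem _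

lemma mul_of_mem_Vmod {b : ℕ} {g : Equiv.Perm (Fin n)} (hg : ∀ k : Fin n, (k : ℕ) < b → g k = k)
    {x : 𝓐} (hx : x ∈ Vmod F n b) : (oof g : 𝓐) * x ∈ Vmod F n b := by
  induction hx using Submodule.span_induction with
  | mem y hy =>
    obtain ⟨h, hh, rfl⟩ := hy
    rw [← map_mul]
    exact of_mem_Vmod (fun k hk => by
      rw [Equiv.Perm.mul_apply, hh k hk, hg k hk])
  | zero => simpa using zero_mem _
  | add y z _ _ hy hz => rw [mul_add]; exact add_mem hy hz
  | smul r y _ hy => rw [mul_smul_comm]; exact Submodule.smul_mem _ r hy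

lemma commute_Vmod {c : ℕ} (hc : c ≤ n) {x : 𝓐} (hx : x ∈ Vmod F n c) :
    Commute ((oof (dPerm n 0 c)) : 𝓐) x := by
  induction hx using Submodule.span_induction with
  | mem y hy =>
    obtain ⟨h, hh, rfl⟩ := hy
    have := dPerm_comm_of_fix hc h hh
    unfold Commute SemiconjBy
    rw [← map_mul, ← map_mul, this]
  | zero => exact Commute.zero_right _
  | add y z _ _ hy hz => exact hy.add_right hz
  | smul r y _ hy => exact hy.smul_right r

lemma prod_comm_map {α : Type*} (f g : α → 𝓐) (u : 𝓐) :
    ∀ L : List α, (∀ a ∈ L, f a * u = u * g a) →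
      (L.map f).prod * u = u * (L.map g).prod := by
  intro L
  induction L with
  | nil => simp
  | cons a L ih =>
    intro h
    simp only [List.map_cons, List.prod_cons, mul_assoc]
    rw [ih (fun a ha => h a (List.mem_cons_of_mem _ ha)), ← mul_assoc,
      h a (List.mem_cons_self (a := a) (l := L)), mul_assoc]

lemma conj_W {b m : ℕ} (h : b + (m + 1) ≤ n) :
    Wm F n b m * oof (dPerm n b (m + 1)) = oof (dPerm n b (m + 1)) * Wm F n (b + 1) m := by
  apply prod_comm_map
  intro s hs
  rw [List.mem_range'_1] at hs
  have hs' : s < m + 1 := by omega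
  rw [sub_mul, mul_sub, one_mul, mul_one, ← map_mul, ← map_mul, perm_vi hs' h]

lemma commute_c1_W {b m : ℕ} (h : b + 1 + m ≤ n) :
    Commute ((1 : 𝓐) - oof (dPerm n 0 (b + 1))) (Wm F n (b + 1) m) := by
  apply Commute.list_prod_right
  intro y hy
  simp only [List.mem_map] at hy
  obtain ⟨s, hs, rfl⟩ := hy
  rw [List.mem_range'_1] at hs
  have hcomm : Commute ((oof (dPerm n 0 (b + 1))) : 𝓐) (oof (dPerm n (b + 1) s)) := by
    unfold Commute SemiconjBy
    rw [← map_mul, ← map_mul, perm_vii (by omega)]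
  exact (Commute.one_right _).sub_right ((Commute.one_left _).sub_left hcomm)

end Algebra

end DSWAux

namespace DSWAux

section Key

variable {F : Type*} [Field F] {n : ℕ}

local notation "𝓐" => MonoidAlgebra F (Equiv.Perm (Fin n))
local notation "oof" => MonoidAlgebra.of F (Equiv.Perm (Fin n))

theorem key_lemma : ∀ m b : ℕ, 1 ≤ b → b + m ≤ n →
    ∃ x ∈ Vmod F n b, Wm F n b m * (1 - oof (uPerm n b m)) = x * Dm F n b m := by
  intro m
  induction m with
  | zero =>
    intro b hb hbn
    refine ⟨0, zero_mem _, ?_⟩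
    rw [Wm_zero, perm_u_zero (by omega), map_one]
    simp
  | succ m ih =>
    rcases Nat.eq_zero_or_pos m with rfl | hm
    · -- m + 1 = 1
      intro b hb hbn
      refine ⟨1, one_mem_Vmod b, ?_⟩
      rw [Wm_one, perm_u_one (by omega), one_mul, one_mul, Dm,
        show List.range' (b+1) 1 = [b+1] by simp [List.range']]
      simp
    · intro b hb hbn
      set e : Equiv.Perm (Fin n) := dPerm n b (m + 1) with he
      set γ : Equiv.Perm (Fin n) := uPerm n b (m + 1) with hγ
      set γ' : Equiv.Perm (Fin n) := uPerm n b m with hγ'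
      set γ'' : Equiv.Perm (Fin n) := uPerm n (b + 1) m with hγ''
      set c1 : Equiv.Perm (Fin n) := dPerm n 0 (b + 1) with hc1
      set cm : Equiv.Perm (Fin n) := dPerm n 0 (b + m + 1) with hcm
      have e1 : (oof e : 𝓐) * oof γ = oof γ' * oof cm := by
        rw [← map_mul, ← map_mul, perm_v (by omega)]
      have e2 : (oof e : 𝓐) * oof γ'' = oof γ' := by
        rw [← map_mul, perm_ii (by omega)]
      have e3 : (oof e : 𝓐) * oof c1 = oof cm := by
        rw [← map_mul, perm_iv (by omega)]
      have e4 : (oof cm : 𝓐) * oof γ'' = oof γ := by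
        rw [← map_mul, perm_iii (by omega)]
      have hB : ((1 : 𝓐) - oof e) * (1 - oof γ)
          = (1 - oof γ') * (1 - oof cm) - oof e * ((1 - oof c1) * (1 - oof γ'')) := by
        have l1 : ((1 : 𝓐) - oof e) * (1 - oof γ) = 1 - oof γ - oof e + oof e * oof γ := by
          noncomm_ring
        have l2 : ((1 : 𝓐) - oof γ') * (1 - oof cm) - oof e * ((1 - oof c1) * (1 - oof γ''))
            = 1 - oof cm - oof γ' + oof γ' * oof cm - oof e + oof e * oof c1 + oof e * oof γ''
              - oof e * oof c1 * oof γ'' := by noncomm_ring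
        rw [l1, l2, e1, e2, e3, e4]
        abel
      obtain ⟨x₁, hx₁V, hx₁⟩ := ih b hb (by omega)
      obtain ⟨x₂, hx₂V, hx₂⟩ := ih (b + 1) (by omega) (by omega)
      refine ⟨x₁ - oof e * x₂, ?_, ?_⟩
      · refine sub_mem hx₁V (mul_of_mem_Vmod ?_ (Vmod_antitone (by omega) hx₂V))
        intro k hk
        exact dPerm_fixes_lt k hk
      · have hcom2 : (1 - oof c1) * x₂ = x₂ * ((1 : 𝓐) - oof c1) :=
          ((Commute.one_left x₂).sub_left (commute_Vmod (by omega) hx₂V)).eq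
        calc Wm F n b (m + 1) * (1 - oof γ)
            = Wm F n b m * (((1 : 𝓐) - oof e) * (1 - oof γ)) := by
              rw [Wm_succ hm, mul_assoc]
          _ = Wm F n b m * ((1 - oof γ') * (1 - oof cm))
              - (Wm F n b m * oof e) * ((1 - oof c1) * (1 - oof γ'')) := by
              rw [hB, mul_sub, mul_assoc]
          _ = (x₁ * Dm F n b m) * (1 - oof cm)
              - (oof e * Wm F n (b + 1) m) * ((1 - oof c1) * (1 - oof γ'')) := by
              rw [← mul_assoc, hx₁, conj_W (by omega)]
          _ = x₁ * Dm F n b (m + 1)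
              - oof e * ((Wm F n (b + 1) m * (1 - oof c1)) * (1 - oof γ'')) := by
              rw [Dm_concat, mul_assoc x₁, mul_assoc, mul_assoc]
          _ = x₁ * Dm F n b (m + 1)
              - oof e * ((1 - oof c1) * (Wm F n (b + 1) m * (1 - oof γ''))) := by
              rw [(commute_c1_W (by omega)).symm.eq, mul_assoc]
          _ = x₁ * Dm F n b (m + 1)
              - oof e * ((1 - oof c1) * (x₂ * Dm F n (b + 1) m)) := by rw [hx₂]
          _ = x₁ * Dm F n b (m + 1)
              - oof e * (x₂ * (((1 : 𝓐) - oof c1) * Dm F n (b + 1) m)) := by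
              rw [← mul_assoc (1 - oof c1), hcom2, mul_assoc]
          _ = x₁ * Dm F n b (m + 1) - (oof e * x₂) * Dm F n b (m + 1) := by
              rw [← Dm_cons, mul_assoc]
          _ = (x₁ - oof e * x₂) * Dm F n b (m + 1) := by rw [sub_mul]

end Key

end DSWAux

namespace DSWAux

section Bridge

variable {F : Type*} [Field F] {n : ℕ}

local notation "𝓐" => MonoidAlgebra F (Equiv.Perm (Fin n))
local notation "oof" => MonoidAlgebra.of F (Equiv.Perm (Fin n))

lemma cycleRange_inv_eq_dPerm (j : Fin n) :
    (Fin.cycleRange j)⁻¹ = dPerm n 0 ((j : ℕ) + 1) := by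
  have hn : 0 < n := j.pos
  obtain ⟨n', rfl⟩ : ∃ n', n = n' + 1 := ⟨n - 1, by omega⟩
  refine inv_eq_of_mul_eq_one_right ?_
  apply Equiv.ext; intro x
  rw [Equiv.Perm.mul_apply, Equiv.Perm.one_apply]
  have hd : ((dPerm (n' + 1) 0 ((j : ℕ) + 1) x : Fin (n' + 1)) : ℕ) = dFun 0 ((j : ℕ) + 1) (x : ℕ) :=
    dPerm_val (by omega) x
  have hx := x.isLt
  rcases Nat.eq_zero_or_pos (x : ℕ) with hx0 | hxpos
  · have hdx : dPerm (n' + 1) 0 ((j : ℕ) + 1) x = j := by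
      apply Fin.ext; rw [hd]; simp only [dFun]; split_ifs <;> omega
    rw [hdx, Fin.cycleRange_self]
    exact (Fin.ext (by simp [hx0])).symm
  · rcases le_or_gt (x : ℕ) (j : ℕ) with hxj | hxj
    · have hyval : ((dPerm (n' + 1) 0 ((j : ℕ) + 1) x : Fin (n' + 1)) : ℕ) = (x : ℕ) - 1 := by
        rw [hd]; simp only [dFun]; split_ifs <;> omega
      have hyj : dPerm (n' + 1) 0 ((j : ℕ) + 1) x < j := by
        rw [Fin.lt_def, hyval]; omega
      rw [Fin.cycleRange_of_lt hyj]
      apply Fin.ext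
      rw [Fin.val_add_one_of_lt (by rw [Fin.lt_def, hyval, Fin.val_last]; omega), hyval]
      omega
    · have hdx : dPerm (n' + 1) 0 ((j : ℕ) + 1) x = x := dPerm_fix_ge (by omega) x (by omega)
      rw [hdx, Fin.cycleRange_of_gt (by rw [Fin.lt_def]; omega)]

lemma dswPartial_eq_Wm {m : ℕ} (hm : m ≤ n) : dswPartial F n m = Wm F n 0 m := by
  unfold dswPartial Wm
  congr 1
  apply List.ext_getElem
  · simp only [List.length_map, List.length_tail, List.length_take, List.length_finRange,
      List.length_range']
    omega
  · intro k h1 h2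
    simp only [List.getElem_map, List.getElem_tail, List.getElem_take, List.getElem_finRange,
      List.getElem_range']
    rw [cycleRange_inv_eq_dPerm]
    simp only [List.length_map, List.length_tail, List.length_take, List.length_finRange] at h1
    congr 2
    simp
    congr 1
    omega

lemma Wm_split {b m m' : ℕ} (hm : 1 ≤ m) (h : m ≤ m') :
    Wm F n b m' = Wm F n b m *
      ((List.range' (m + 1) (m' - m)).map (fun s => (1 : 𝓐) - oof (dPerm n b s))).prod := by
  rw [Wm, Wm, show m' - 1 = (m' - m) + (m - 1) by omega,
    show List.range' 2 ((m' - m) + (m - 1)) =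
        List.range' 2 (m - 1) ++ List.range' (m + 1) (m' - m) by
      rw [show m + 1 = 2 + 1 * (m - 1) by omega]
      rw [Nat.add_comm (m' - m)]
      exact (List.range'_append (s := 2) (m := m - 1) (n := m' - m) (step := 1)).symm,
    List.map_append, List.prod_append]

lemma Wm_coeff (hn : 0 < n) :
    ∀ m, m ≤ n → ∃ y : MonoidAlgebra F (Equiv.Perm (Fin n)),
      Wm F n 0 m = 1 + y ∧
      ∀ g : Equiv.Perm (Fin n),
        (g ⟨0, hn⟩ = ⟨0, hn⟩ ∨ ∃ k : Fin n, m ≤ (k : ℕ) ∧ g k ≠ k) → y.coeff g = 0 := by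
  intro m
  induction m with
  | zero =>
    intro _
    exact ⟨0, by rw [Wm_zero, add_zero], fun g _ => rfl⟩
  | succ m ih =>
    intro hmn
    rcases Nat.eq_zero_or_pos m with rfl | hm
    · exact ⟨0, by rw [Wm_one, add_zero], fun g _ => rfl⟩
    · obtain ⟨y, hWy, hy0⟩ := ih (by omega)
      set d : Equiv.Perm (Fin n) := dPerm n 0 (m + 1) with hd
      have h00 : ((⟨0, hn⟩ : Fin n) : ℕ) = 0 := rfl
      have hd0 : ((d ⟨0, hn⟩ : Fin n) : ℕ) = m := by
        rw [hd, dPerm_val (by omega), h00]; simp only [dFun]; split_ifs <;> omega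
      have hdfix : ∀ k : Fin n, m + 1 ≤ (k : ℕ) → d k = k := by
        intro k hk; exact dPerm_fix_ge (by omega) k (by omega)
      refine ⟨y - oof d - y * oof d, ?_, ?_⟩
      · rw [Wm_succ hm, hWy]
        noncomm_ring
      · intro g hg
        have hgd : ∀ h : Equiv.Perm (Fin n),
            (h ⟨0, hn⟩ ≠ ⟨0, hn⟩ ∧ ∀ k : Fin n, m ≤ (k : ℕ) → h k = k) →
            (h * d) ⟨0, hn⟩ ≠ ⟨0, hn⟩ ∧ ∀ k : Fin n, m + 1 ≤ (k : ℕ) → (h * d) k = k := by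
          intro h ⟨_, hfix⟩
          constructor
          · rw [Equiv.Perm.mul_apply]
            have : h (d ⟨0, hn⟩) = d ⟨0, hn⟩ := hfix _ hd0.ge
            rw [this]
            intro hcon
            have hval := congrArg Fin.val hcon
            rw [hd0, h00] at hval
            omega
          · intro k hk
            rw [Equiv.Perm.mul_apply, hdfix k hk]
            exact hfix k (by omega)
        have hne : ∀ p : Equiv.Perm (Fin n),
            (p ⟨0, hn⟩ = ⟨0, hn⟩ ∨ ∃ k : Fin n, m ≤ (k : ℕ) ∧ p k ≠ k) →
            (p ⟨0, hn⟩ = ⟨0, hn⟩ ∨ ∃ k : Fin n, m + 1 ≤ (k : ℕ) ∧ p k ≠ k) → True := fun _ _ _ => trivial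
        -- y g - (oof d) g - (y * oof d) g = 0
        have h1 : y.coeff g = 0 := by
          apply hy0
          rcases hg with hg | ⟨k, hk, hkne⟩
          · exact Or.inl hg
          · exact Or.inr ⟨k, by omega, hkne⟩
        have h2 : (oof d : 𝓐).coeff g = 0 := by
          rw [MonoidAlgebra.of_apply, MonoidAlgebra.coeff_single, Finsupp.single_apply]
          rw [if_neg]
          intro hcon
          subst hcon
          rcases hg with hg | ⟨k, hk, hkne⟩
          · have hval := congrArg Fin.val hg
            rw [hd0, h00] at hval
            omega
          · exact hkne (hdfix k hk)
        have h3 : (y * oof d : 𝓐).coeff g = 0 := by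
          rw [MonoidAlgebra.of_apply, MonoidAlgebra.coeff_mul_single_apply, mul_one]
          apply hy0
          by_cases hA : (g * d⁻¹) ⟨0, hn⟩ = ⟨0, hn⟩
          · exact Or.inl hA
          · by_cases hB : ∀ k : Fin n, m ≤ (k : ℕ) → (g * d⁻¹) k = k
            · exfalso
              have hgd' := hgd (g * d⁻¹) ⟨hA, hB⟩
              rw [inv_mul_cancel_right] at hgd'
              rcases hg with hg | ⟨k, hk, hkne⟩
              · exact hgd'.1 hg
              · exact hkne (hgd'.2 k hk)
            · push_neg at hB
              obtain ⟨k, hk, hkne⟩ := hB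
              exact Or.inr ⟨k, hk, hkne⟩
        rw [MonoidAlgebra.coeff_sub, MonoidAlgebra.coeff_sub, Finsupp.sub_apply, Finsupp.sub_apply, h1, h2, h3]
        ring

end Bridge

end DSWAux

open DSWAux in
/-- For every `n ≥ 2` and every field `F`, the set `{π·c_n·ω_n : π ∈ 𝔖_{n−1}}` is an
`F`-basis of the left ideal `F𝔖_n·ω_n`; in particular `dim_F(Lie_F(n)) = (n−1)!`.
Here `𝔖_{n-1} ≤ 𝔖_n` is the stabilizer of the last point `i` (the point with value
`n-1` in zero-based indexing), and `c_n` is the backward cycle `(n, n-1, …, 2, 1)`. -/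
theorem dsw_basis (F : Type*) [Field F] (n : ℕ) (hn : 2 ≤ n) (i : Fin n)
    (hi : (i : ℕ) = n - 1) :
    LinearIndependent F
      (fun π : MulAction.stabilizer (Equiv.Perm (Fin n)) i =>
        MonoidAlgebra.of F (Equiv.Perm (Fin n)) (π : Equiv.Perm (Fin n)) *
          MonoidAlgebra.of F (Equiv.Perm (Fin n)) (Fin.cycleRange i)⁻¹ * dsw F n) ∧
    Submodule.span F
      (Set.range (fun π : MulAction.stabilizer (Equiv.Perm (Fin n)) i =>
        MonoidAlgebra.of F (Equiv.Perm (Fin n)) (π : Equiv.Perm (Fin n)) *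
          MonoidAlgebra.of F (Equiv.Perm (Fin n)) (Fin.cycleRange i)⁻¹ * dsw F n)) =
      (Submodule.span (MonoidAlgebra F (Equiv.Perm (Fin n))) {dsw F n}).restrictScalars F ∧
    Module.finrank F
      ↥((Submodule.span (MonoidAlgebra F (Equiv.Perm (Fin n))) {dsw F n}).restrictScalars F) =
      Nat.factorial (n - 1) := by
  have h0n : 0 < n := by omega
  classical
  set c : Equiv.Perm (Fin n) := (Fin.cycleRange i)⁻¹ with hcdef
  have hc_eq : c = dPerm n 0 ((i : ℕ) + 1) := cycleRange_inv_eq_dPerm i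
  have hc0 : c ⟨0, h0n⟩ = i := by
    apply Fin.ext
    rw [hc_eq, dPerm_val (by omega), show ((⟨0, h0n⟩ : Fin n) : ℕ) = 0 from rfl]
    simp only [dFun]
    split_ifs <;> omega
  have hcinv : c⁻¹ i = ⟨0, h0n⟩ := by
    rw [← hc0]; exact c.symm_apply_apply _
  -- coefficient facts for ω
  obtain ⟨y, hWy, hy0⟩ := Wm_coeff (F := F) h0n n le_rfl
  have hωW : dsw F n = Wm F n 0 n := dswPartial_eq_Wm le_rfl
  have hω1 : (dsw F n).coeff (1 : Equiv.Perm (Fin n)) = 1 := by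
    rw [hωW, hWy, MonoidAlgebra.coeff_add, Finsupp.add_apply]
    have : y.coeff (1 : Equiv.Perm (Fin n)) = 0 := hy0 1 (Or.inl rfl)
    rw [this, MonoidAlgebra.one_def, MonoidAlgebra.coeff_single, Finsupp.single_apply, if_pos rfl, add_zero]
  have hω0 : ∀ g : Equiv.Perm (Fin n), g ≠ 1 → g ⟨0, h0n⟩ = ⟨0, h0n⟩ → (dsw F n).coeff g = 0 := by
    intro g hg1 hgfix
    rw [hωW, hWy, MonoidAlgebra.coeff_add, Finsupp.add_apply, hy0 g (Or.inl hgfix), MonoidAlgebra.one_def,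
      MonoidAlgebra.coeff_single, Finsupp.single_apply, if_neg (fun h => hg1 h.symm), add_zero]
  -- stabilizer facts
  have hstabi : ∀ π : MulAction.stabilizer (Equiv.Perm (Fin n)) i,
      (π : Equiv.Perm (Fin n)) i = i := by
    intro π
    have := π.2
    rwa [MulAction.mem_stabilizer_iff, Equiv.Perm.smul_def] at this
  -- ### Linear independence
  have hindep : LinearIndependent F
      (fun π : MulAction.stabilizer (Equiv.Perm (Fin n)) i =>
        MonoidAlgebra.of F (Equiv.Perm (Fin n)) (π : Equiv.Perm (Fin n)) *
          MonoidAlgebra.of F (Equiv.Perm (Fin n)) (Fin.cycleRange i)⁻¹ * dsw F n) := by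
    rw [linearIndependent_iff']
    intro s l hsum π₀ hπ₀
    have happ := congrArg
      (fun z : MonoidAlgebra F (Equiv.Perm (Fin n)) => z.coeff ((π₀ : Equiv.Perm (Fin n)) * c)) hsum
    rw [MonoidAlgebra.coeff_sum, Finsupp.finset_sum_apply] at happ
    have hterm : ∀ π ∈ s,
        (l π • (MonoidAlgebra.of F (Equiv.Perm (Fin n)) (π : Equiv.Perm (Fin n)) *
          MonoidAlgebra.of F (Equiv.Perm (Fin n)) (Fin.cycleRange i)⁻¹ * dsw F n)).coeff
          ((π₀ : Equiv.Perm (Fin n)) * c) = if π = π₀ then l π else 0 := by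
      intro π _
      rw [MonoidAlgebra.coeff_smul_apply, smul_eq_mul, ← hcdef, ← map_mul, MonoidAlgebra.of_apply,
        MonoidAlgebra.coeff_single_mul_apply, one_mul]
      by_cases hππ : π = π₀
      · subst hππ
        rw [if_pos rfl, inv_mul_cancel, hω1, mul_one]
      · rw [if_neg hππ]
        have hgne : ((π : Equiv.Perm (Fin n)) * c)⁻¹ * ((π₀ : Equiv.Perm (Fin n)) * c) ≠ 1 := by
          intro hcon
          rw [inv_mul_eq_one] at hcon
          exact hππ (Subtype.coe_injective (mul_right_cancel hcon))
        have hgfix : (((π : Equiv.Perm (Fin n)) * c)⁻¹ * ((π₀ : Equiv.Perm (Fin n)) * c))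
            ⟨0, h0n⟩ = ⟨0, h0n⟩ := by
          have hπinv : (π : Equiv.Perm (Fin n))⁻¹ i = i := by
            apply (π : Equiv.Perm (Fin n)).injective
            rw [show (π : Equiv.Perm (Fin n)) ((π : Equiv.Perm (Fin n))⁻¹ i) = i from
              Equiv.apply_symm_apply _ i, hstabi π]
          simp only [mul_inv_rev, Equiv.Perm.mul_apply]
          rw [hc0, hstabi π₀, hπinv, hcinv]
        rw [hω0 _ hgne hgfix, mul_zero]
    rw [Finset.sum_congr rfl hterm, Finset.sum_ite_eq' s π₀ (fun π => l π), if_pos hπ₀] at happ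
    simpa using happ
  -- ### membership of σω for σ sending position 0 to i
  have member_of_fix : ∀ τ : Equiv.Perm (Fin n), τ ⟨0, h0n⟩ = i →
      MonoidAlgebra.of F (Equiv.Perm (Fin n)) τ * dsw F n ∈
        Submodule.span F (Set.range (fun π : MulAction.stabilizer (Equiv.Perm (Fin n)) i =>
          MonoidAlgebra.of F (Equiv.Perm (Fin n)) (π : Equiv.Perm (Fin n)) *
            MonoidAlgebra.of F (Equiv.Perm (Fin n)) (Fin.cycleRange i)⁻¹ * dsw F n)) := by
    intro τ hτ
    have hπmem : τ * c⁻¹ ∈ MulAction.stabilizer (Equiv.Perm (Fin n)) i := by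
      rw [MulAction.mem_stabilizer_iff, Equiv.Perm.smul_def, Equiv.Perm.mul_apply, hcinv, hτ]
    apply Submodule.subset_span
    refine ⟨⟨τ * c⁻¹, hπmem⟩, ?_⟩
    show MonoidAlgebra.of F (Equiv.Perm (Fin n)) (τ * c⁻¹) *
      MonoidAlgebra.of F (Equiv.Perm (Fin n)) (Fin.cycleRange i)⁻¹ * dsw F n = _
    rw [← hcdef, ← map_mul, inv_mul_cancel_right]
  -- ### spanning
  have spanmain : ∀ σ : Equiv.Perm (Fin n),
      MonoidAlgebra.of F (Equiv.Perm (Fin n)) σ * dsw F n ∈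
        Submodule.span F (Set.range (fun π : MulAction.stabilizer (Equiv.Perm (Fin n)) i =>
          MonoidAlgebra.of F (Equiv.Perm (Fin n)) (π : Equiv.Perm (Fin n)) *
            MonoidAlgebra.of F (Equiv.Perm (Fin n)) (Fin.cycleRange i)⁻¹ * dsw F n)) := by
    intro σ
    have hσj : σ (σ⁻¹ i) = i := σ.apply_symm_apply i
    by_cases hj0 : ((σ⁻¹ i : Fin n) : ℕ) = 0
    · apply member_of_fix
      have h00 : (⟨0, h0n⟩ : Fin n) = σ⁻¹ i := by
        apply Fin.ext
        rw [show ((⟨0, h0n⟩ : Fin n) : ℕ) = 0 from rfl]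
        omega
      rw [h00]
      exact hσj
    · set jj : ℕ := ((σ⁻¹ i : Fin n) : ℕ) with hjj
      have hj1 : 1 ≤ jj := by omega
      have hjn : jj + 1 ≤ n := (σ⁻¹ i).isLt
      obtain ⟨x, hxV, hx⟩ := key_lemma (F := F) (n := n) jj 1 le_rfl (by omega)
      set d : Equiv.Perm (Fin n) := dPerm n 0 (jj + 1) with hd
      have hd0 : d ⟨0, h0n⟩ = σ⁻¹ i := by
        apply Fin.ext
        rw [hd, dPerm_val (by omega), show ((⟨0, h0n⟩ : Fin n) : ℕ) = 0 from rfl]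
        simp only [dFun]
        split_ifs <;> omega
      -- the rewriting identity
      have h1 : Wm F n 0 jj * MonoidAlgebra.of F (Equiv.Perm (Fin n)) d
          = MonoidAlgebra.of F (Equiv.Perm (Fin n)) d * Wm F n 1 jj := by
        simpa using conj_W (F := F) (n := n) (b := 0) (m := jj) (by omega)
      have h2 : (MonoidAlgebra.of F (Equiv.Perm (Fin n)) d) *
          MonoidAlgebra.of F (Equiv.Perm (Fin n)) (uPerm n 1 jj) = 1 := by
        rw [← map_mul, perm_ix (by omega), map_one]
      have hid : -(MonoidAlgebra.of F (Equiv.Perm (Fin n)) d * (x * Wm F n 0 (jj + 1)))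
          = Wm F n 0 (jj + 1) := by
        calc -(MonoidAlgebra.of F (Equiv.Perm (Fin n)) d * (x * Wm F n 0 (jj + 1)))
            = -(MonoidAlgebra.of F (Equiv.Perm (Fin n)) d * (x * Dm F n 1 jj)) := by
              rw [Dm_one_eq_Wm]
          _ = -(MonoidAlgebra.of F (Equiv.Perm (Fin n)) d *
              (Wm F n 1 jj * (1 - MonoidAlgebra.of F (Equiv.Perm (Fin n)) (uPerm n 1 jj)))) := by
              rw [hx]
          _ = -((Wm F n 0 jj * MonoidAlgebra.of F (Equiv.Perm (Fin n)) d) *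
              (1 - MonoidAlgebra.of F (Equiv.Perm (Fin n)) (uPerm n 1 jj))) := by
              rw [h1, mul_assoc]
          _ = -(Wm F n 0 jj * (MonoidAlgebra.of F (Equiv.Perm (Fin n)) d - 1)) := by
              rw [mul_assoc, mul_sub, mul_one, h2]
          _ = Wm F n 0 jj * (1 - MonoidAlgebra.of F (Equiv.Perm (Fin n)) d) := by
              rw [mul_sub, mul_sub, mul_one, neg_sub]
          _ = Wm F n 0 (jj + 1) := (Wm_succ hj1 0).symm
      have hsplit := Wm_split (F := F) (n := n) (b := 0) (m := jj + 1) (m' := n) (by omega) hjn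
      have hω2 : dsw F n = -(MonoidAlgebra.of F (Equiv.Perm (Fin n)) d * (x * dsw F n)) := by
        conv_lhs => rw [hωW, hsplit, ← hid]
        rw [neg_mul, mul_assoc, mul_assoc, ← hsplit, ← hωW]
      have haux : ∀ z ∈ Vmod F n 1,
          MonoidAlgebra.of F (Equiv.Perm (Fin n)) (σ * d) * (z * dsw F n) ∈
            Submodule.span F (Set.range (fun π : MulAction.stabilizer (Equiv.Perm (Fin n)) i =>
              MonoidAlgebra.of F (Equiv.Perm (Fin n)) (π : Equiv.Perm (Fin n)) *
                MonoidAlgebra.of F (Equiv.Perm (Fin n)) (Fin.cycleRange i)⁻¹ * dsw F n)) := by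
        intro z hz
        induction hz using Submodule.span_induction with
        | mem w hw =>
          obtain ⟨h, hh, rfl⟩ := hw
          rw [← mul_assoc, ← map_mul]
          apply member_of_fix
          have hh0 : h ⟨0, h0n⟩ = ⟨0, h0n⟩ := hh _ (by norm_num)
          rw [Equiv.Perm.mul_apply, Equiv.Perm.mul_apply, hh0, hd0]
          exact hσj
        | zero => simpa using zero_mem _
        | add a b _ _ iha ihb =>
          rw [add_mul, mul_add]
          exact add_mem iha ihb
        | smul r a _ iha =>
          rw [smul_mul_assoc, mul_smul_comm]
          exact Submodule.smul_mem _ r iha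
      have hfinal : MonoidAlgebra.of F (Equiv.Perm (Fin n)) σ * dsw F n
          = -(MonoidAlgebra.of F (Equiv.Perm (Fin n)) (σ * d) * (x * dsw F n)) := by
        conv_lhs => rw [hω2]
        rw [mul_neg, map_mul, mul_assoc]
      rw [hfinal]
      exact neg_mem (haux x hxV)
  -- ### span equality
  have hspan : Submodule.span F
      (Set.range (fun π : MulAction.stabilizer (Equiv.Perm (Fin n)) i =>
        MonoidAlgebra.of F (Equiv.Perm (Fin n)) (π : Equiv.Perm (Fin n)) *
          MonoidAlgebra.of F (Equiv.Perm (Fin n)) (Fin.cycleRange i)⁻¹ * dsw F n)) =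
      (Submodule.span (MonoidAlgebra F (Equiv.Perm (Fin n))) {dsw F n}).restrictScalars F := by
    apply le_antisymm
    · rw [Submodule.span_le]
      rintro z ⟨π, rfl⟩
      simp only [SetLike.mem_coe, Submodule.restrictScalars_mem, Submodule.mem_span_singleton]
      exact ⟨MonoidAlgebra.of F (Equiv.Perm (Fin n)) (π : Equiv.Perm (Fin n)) *
        MonoidAlgebra.of F (Equiv.Perm (Fin n)) (Fin.cycleRange i)⁻¹, by rw [smul_eq_mul]⟩
    · intro z hz
      rw [Submodule.restrictScalars_mem, Submodule.mem_span_singleton] at hz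
      obtain ⟨a, rfl⟩ := hz
      rw [smul_eq_mul]
      induction a using MonoidAlgebra.induction_linear with
      | zero => simpa using zero_mem _
      | add f g hf hg =>
        rw [add_mul]
        exact add_mem hf hg
      | single g r =>
        have hsg : (MonoidAlgebra.single g r : MonoidAlgebra F (Equiv.Perm (Fin n)))
            = r • MonoidAlgebra.of F (Equiv.Perm (Fin n)) g := by
          rw [MonoidAlgebra.of_apply, MonoidAlgebra.smul_single', mul_one]
        rw [hsg, smul_mul_assoc]
        exact Submodule.smul_mem _ r (spanmain g)
  -- ### cardinality of the stabilizer
  haveI instOrb : Fintype ↥(MulAction.orbit (Equiv.Perm (Fin n)) i) := Fintype.ofFinite _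
  haveI instStab : Fintype ↥(MulAction.stabilizer (Equiv.Perm (Fin n)) i) := Fintype.ofFinite _
  have horb : MulAction.orbit (Equiv.Perm (Fin n)) i = Set.univ := by
    apply Set.eq_univ_of_forall
    intro j
    exact ⟨Equiv.swap i j, by
      show (Equiv.swap i j) • i = j
      rw [Equiv.Perm.smul_def, Equiv.swap_apply_left]⟩
  have hcardorb : Fintype.card ↥(MulAction.orbit (Equiv.Perm (Fin n)) i) = n :=
    (Fintype.card_congr ((Equiv.setCongr horb).trans (Equiv.Set.univ _))).trans (Fintype.card_fin n)
  have hos := MulAction.card_orbit_mul_card_stabilizer_eq_card_group (Equiv.Perm (Fin n)) i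
  rw [hcardorb, Fintype.card_perm, Fintype.card_fin] at hos
  have hstabcard : Fintype.card ↥(MulAction.stabilizer (Equiv.Perm (Fin n)) i)
      = (n - 1).factorial := by
    have h2 : n * (n - 1).factorial = n.factorial := Nat.mul_factorial_pred (by omega)
    refine Nat.eq_of_mul_eq_mul_left h0n ?_
    rw [h2]
    exact hos
  refine ⟨hindep, hspan, ?_⟩
  rw [← hspan, finrank_span_eq_card hindep, hstabcard]
end

section
/- Let F be a field, V an F-vector space, and r ≥ 1. For all v_1, …, v_r ∈ V, the left-normed Lie bracket satisfies [[v_1, v_2, …, v_r] = (v_1 ⊗ ⋯ ⊗ v_r) * ω_r, where ω_r = (1−c_2)(1−c_3)⋯(1−c_r) ∈ F𝔖_r acts on V^{⊗r} by place permutations (and ω_1 = 1). -/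
/-- The left-normed Lie bracket `[[v_1,v_2,…,v_r] = [⋯[[v_1,v_2],v_3],…,v_r]` in the
tensor algebra of `V`, where `[x,y] = x⊗y − y⊗x` (equal to `v_1` for `r = 1`). -/
noncomputable def leftNormedBracket (F : Type*) [Field F] (V : Type*) [AddCommGroup V]
    [Module F V] : (r : ℕ) → (Fin r → V) → TensorAlgebra F V
  | 0, _ => 0
  | 1, v => TensorAlgebra.ι F (v 0)
  | (r + 2), v =>
      leftNormedBracket F V (r + 1) (fun i => v i.castSucc) *
          TensorAlgebra.ι F (v (Fin.last (r + 1))) -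
        TensorAlgebra.ι F (v (Fin.last (r + 1))) *
          leftNormedBracket F V (r + 1) (fun i => v i.castSucc)

/-- The pure tensor `v_1 ⊗ ⋯ ⊗ v_r` in the tensor algebra of `V`. -/
noncomputable def pureTensor (F : Type*) [Field F] (V : Type*) [AddCommGroup V] [Module F V]
    (r : ℕ) (v : Fin r → V) : TensorAlgebra F V :=
  ((List.finRange r).map (fun i => TensorAlgebra.ι F (v i))).prod

open Equiv Equiv.Perm Fin List

/-- The equiv `Fin n ≃ {i : Fin (n+1) // i < n}` given by `castSucc`. -/
def finCastSuccEquiv (n : ℕ) : Fin n ≃ {i : Fin (n + 1) // (i : ℕ) < n} :=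
  ⟨fun i => ⟨i.castSucc, i.isLt⟩, fun s => ⟨s.1, s.2⟩, fun _ => rfl, fun _ => rfl⟩

/-- Embed `Perm (Fin n)` into `Perm (Fin (n+1))`, fixing the last point. -/
noncomputable def permExtend (n : ℕ) : Perm (Fin n) →* Perm (Fin (n + 1)) :=
  Equiv.Perm.extendDomainHom (finCastSuccEquiv n)

lemma permExtend_castSucc {n : ℕ} (σ : Perm (Fin n)) (i : Fin n) :
    permExtend n σ i.castSucc = (σ i).castSucc := by
  have h : ((i.castSucc : Fin (n+1)) : ℕ) < n := i.isLt
  have := Equiv.Perm.extendDomain_apply_subtype σ (finCastSuccEquiv n) h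
  simpa [permExtend, Equiv.Perm.extendDomainHom, finCastSuccEquiv] using this

lemma permExtend_last {n : ℕ} (σ : Perm (Fin n)) :
    permExtend n σ (Fin.last n) = Fin.last n := by
  have h : ¬ ((Fin.last n : Fin (n+1)) : ℕ) < n := by simp
  have := Equiv.Perm.extendDomain_apply_not_subtype σ (finCastSuccEquiv n) h
  simpa [permExtend, Equiv.Perm.extendDomainHom] using this

lemma permExtend_cycleRange {n : ℕ} (j : Fin (n + 1)) :
    permExtend (n + 1) (Fin.cycleRange j) = Fin.cycleRange j.castSucc := by
  ext i
  rcases Fin.eq_castSucc_or_eq_last i with ⟨k, rfl⟩ | rfl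
  · rw [permExtend_castSucc]
    rcases lt_trichotomy k j with h | h | h
    · rw [Fin.cycleRange_of_lt h, Fin.cycleRange_of_lt (by simpa using h)]
      simp only [Fin.ext_iff, Fin.coe_castSucc]
      rw [Fin.val_add_one_of_lt (lt_of_lt_of_le h (Fin.le_last j)),
        Fin.val_add_one_of_lt (Fin.castSucc_lt_last k)]
      simp
    · subst h
      rw [Fin.cycleRange_self, Fin.cycleRange_self]
      simp
    · rw [Fin.cycleRange_of_gt h, Fin.cycleRange_of_gt (by simpa using h)]
  · rw [permExtend_last, Fin.cycleRange_of_gt (Fin.castSucc_lt_last j)]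

lemma finRange_succ_eq_append (n : ℕ) :
    List.finRange (n + 1) = (List.finRange n).map Fin.castSucc ++ [Fin.last n] := by
  rw [← List.ofFn_id, List.ofFn_succ', List.concat_eq_append, List.ofFn_eq_map, ← List.ofFn_id,
    List.ofFn_eq_map, List.map_map]
  simp [Function.comp_def]

lemma dsw_succ (F : Type*) [Field F] (n : ℕ) :
    dsw F (n + 2) = (MonoidAlgebra.mapDomainAlgHom F F (permExtend (n + 1))) (dsw F (n + 1)) *
      (1 - MonoidAlgebra.of F (Perm (Fin (n + 2))) (Fin.cycleRange (Fin.last (n + 1)))⁻¹) := by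
  have hf : ∀ k : Fin (n + 1),
      (MonoidAlgebra.mapDomainAlgHom F F (permExtend (n + 1)))
        ((1 : MonoidAlgebra F (Perm (Fin (n + 1)))) -
          MonoidAlgebra.of F (Perm (Fin (n + 1))) (Fin.cycleRange k)⁻¹)
      = 1 - MonoidAlgebra.of F (Perm (Fin (n + 2))) (Fin.cycleRange k.castSucc)⁻¹ := by
    intro k
    rw [map_sub, map_one]
    congr 1
    have h2 : (permExtend (n + 1)) ((Fin.cycleRange k)⁻¹) = (Fin.cycleRange k.castSucc)⁻¹ := by
      rw [map_inv, permExtend_cycleRange]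
    simp [MonoidAlgebra.of_apply, h2]
  have hlist : (List.finRange (n + 2)).tail
      = ((List.finRange (n + 1)).tail.map Fin.castSucc) ++ [Fin.last (n + 1)] := by
    rw [finRange_succ_eq_append (n + 1), List.finRange_succ (n := n)]
    simp
  have htake : ∀ m : ℕ, (List.finRange m).take m = List.finRange m := by
    intro m; simp
  unfold dsw dswPartial
  rw [htake, htake, hlist, List.map_append, List.prod_append, map_list_prod, List.map_map,
    List.map_map]
  congr 1
  · exact congrArg List.prod (List.map_congr_left (fun k _ => (hf k).symm))
  · simp

lemma cycleRange_last_inv_zero (n : ℕ) :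
    (Fin.cycleRange (Fin.last (n + 1)))⁻¹ 0 = Fin.last (n + 1) := by
  rw [← Fin.cycleRange_self (Fin.last (n + 1)), Equiv.Perm.inv_def, Equiv.symm_apply_apply]

lemma cycleRange_last_inv_succ {n : ℕ} (i : Fin (n + 1)) :
    (Fin.cycleRange (Fin.last (n + 1)))⁻¹ i.succ = i.castSucc := by
  have : Fin.cycleRange (Fin.last (n + 1)) i.castSucc = i.succ := by
    rw [Fin.cycleRange_of_lt (Fin.castSucc_lt_last i), Fin.coeSucc_eq_succ]
  rw [← this, Equiv.Perm.inv_def, Equiv.symm_apply_apply]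

lemma pureTensor_permExtend (F : Type*) [Field F] (V : Type*) [AddCommGroup V] [Module F V]
    {n : ℕ} (v : Fin (n + 1) → V) (σ : Perm (Fin n)) :
    pureTensor F V (n + 1) (fun i => v (permExtend n σ i)) =
      pureTensor F V n (fun i => v (Fin.castSucc (σ i))) *
        TensorAlgebra.ι F (v (Fin.last n)) := by
  unfold pureTensor
  rw [finRange_succ_eq_append n, List.map_append, List.prod_append, List.map_map]
  simp [Function.comp_def, permExtend_castSucc, permExtend_last]

lemma pureTensor_permExtend_mul_cinv (F : Type*) [Field F] (V : Type*) [AddCommGroup V]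
    [Module F V] {n : ℕ} (v : Fin (n + 2) → V) (σ : Perm (Fin (n + 1))) :
    pureTensor F V (n + 2)
        (fun i => v ((permExtend (n + 1) σ * (Fin.cycleRange (Fin.last (n + 1)))⁻¹) i)) =
      TensorAlgebra.ι F (v (Fin.last (n + 1))) *
        pureTensor F V (n + 1) (fun i => v (Fin.castSucc (σ i))) := by
  unfold pureTensor
  rw [List.finRange_succ (n := n + 1), List.map_cons, List.prod_cons, List.map_map]
  congr 1
  · simp only [Equiv.Perm.mul_apply, cycleRange_last_inv_zero, permExtend_last]
  · refine congrArg List.prod (List.map_congr_left ?_)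
    intro i _
    simp only [Function.comp_apply, Equiv.Perm.mul_apply, cycleRange_last_inv_succ,
      permExtend_castSucc]

lemma step_sum (F : Type*) [Field F] (V : Type*) [AddCommGroup V] [Module F V] {n : ℕ}
    (v : Fin (n + 2) → V) (x : MonoidAlgebra F (Perm (Fin (n + 1)))) :
    Finsupp.sum ((MonoidAlgebra.mapDomainAlgHom F F (permExtend (n + 1))) x *
        (1 - MonoidAlgebra.of F (Perm (Fin (n + 2))) (Fin.cycleRange (Fin.last (n + 1)))⁻¹)).coeff
      (fun σ c => c • pureTensor F V (n + 2) (fun i => v (σ i)))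
    = (Finsupp.sum x.coeff (fun σ c => c • pureTensor F V (n + 1) (fun i => v ((σ i).castSucc)))) *
        TensorAlgebra.ι F (v (Fin.last (n + 1))) -
      TensorAlgebra.ι F (v (Fin.last (n + 1))) *
        (Finsupp.sum x.coeff (fun σ c => c • pureTensor F V (n + 1)
          (fun i => v ((σ i).castSucc)))) := by
  rw [← Finsupp.linearCombination_apply (R := F) (v := fun σ : Perm (Fin (n + 2)) =>
        pureTensor F V (n + 2) (fun i => v (σ i))),
      ← Finsupp.linearCombination_apply (R := F) (v := fun σ : Perm (Fin (n + 1)) =>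
        pureTensor F V (n + 1) (fun i => v ((σ i).castSucc)))]
  induction x using MonoidAlgebra.induction_linear with
  | zero => simp
  | add a b ha hb =>
      rw [map_add, add_mul, MonoidAlgebra.coeff_add, map_add, ha, hb, MonoidAlgebra.coeff_add,
        map_add, add_mul, mul_add]
      abel
  | single σ c =>
      have hE : (MonoidAlgebra.mapDomainAlgHom F F (permExtend (n + 1)))
          (MonoidAlgebra.single σ c) = MonoidAlgebra.single (permExtend (n + 1) σ) c := by
        simp
      rw [hE, mul_sub, mul_one, MonoidAlgebra.of_apply, MonoidAlgebra.single_mul_single, mul_one,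
        MonoidAlgebra.coeff_sub, MonoidAlgebra.coeff_single, MonoidAlgebra.coeff_single,
        MonoidAlgebra.coeff_single, map_sub, Finsupp.linearCombination_single, Finsupp.linearCombination_single,
        Finsupp.linearCombination_single]
      rw [pureTensor_permExtend F V v σ, pureTensor_permExtend_mul_cinv F V v σ]
      rw [smul_mul_assoc, mul_smul_comm]

lemma dsw_one (F : Type*) [Field F] : dsw F 1 = 1 := by
  unfold dsw dswPartial
  simp [List.finRange_succ]

/-- For a field `F`, an `F`-vector space `V` and `r ≥ 1`, the left-normed Lie bracket
satisfies `[[v_1, v_2, …, v_r] = (v_1 ⊗ ⋯ ⊗ v_r) * ω_r`, where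
`ω_r = (1−c_2)(1−c_3)⋯(1−c_r) ∈ F𝔖_r` acts on `V^{⊗r}` by place permutations:
`(v_1 ⊗ ⋯ ⊗ v_r) * σ = v_{σ(1)} ⊗ ⋯ ⊗ v_{σ(r)}`, extended `F`-linearly to `F𝔖_r`. -/
theorem leftNormedBracket_eq_dsw_action (F : Type*) [Field F] (V : Type*) [AddCommGroup V]
    [Module F V] (r : ℕ) (hr : 1 ≤ r) (v : Fin r → V) :
    leftNormedBracket F V r v =
      Finsupp.sum (dsw F r).coeff (fun σ c => c • pureTensor F V r (fun i => v (σ i))) := by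
  obtain ⟨m, rfl⟩ : ∃ m, r = m + 1 := ⟨r - 1, (Nat.succ_pred_eq_of_pos hr).symm⟩
  clear hr
  induction m with
  | zero =>
      rw [dsw_one, show (1 : MonoidAlgebra F (Perm (Fin 1))) = MonoidAlgebra.single 1 1 from rfl,
        MonoidAlgebra.coeff_single,
        Finsupp.sum_single_index (by simp)]
      show TensorAlgebra.ι F (v 0) = _
      simp [pureTensor, List.finRange_succ]
  | succ m ih =>
      show leftNormedBracket F V (m + 1) (fun i => v i.castSucc) *
            TensorAlgebra.ι F (v (Fin.last (m + 1))) -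
          TensorAlgebra.ι F (v (Fin.last (m + 1))) *
            leftNormedBracket F V (m + 1) (fun i => v i.castSucc) = _
      rw [ih (fun i => v i.castSucc), dsw_succ F m, step_sum F V v (dsw F (m + 1))]
end

section
/- Let A be a finite-dimensional algebra over a field F with a symmetric, associative, non-degenerate F-bilinear form, let ι : A → A be an involutory F-algebra anti-automorphism, and let ω ∈ A. Then Hom_F(Aω, F)^ι ≅ Aω^ι as left A-modules, where Hom_F(Aω,F)^ι denotes the right A-module Hom_F(Aω,F) turned into a left A-module via a·f := f·a^ι. -/
/-- Left multiplication by `a ∈ A` on a left ideal `N` of `A`, as an `F`-linear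
endomorphism of `N`. For `f ∈ Hom_F(N, F)`, the right `A`-action is
`(f·a)(x) = f(ax)`, i.e. `f·a = f ∘ₗ leftMulOn F N a`; the left `A`-action twisted by an
anti-automorphism `ι` is `a·f = f·ι(a) = f ∘ₗ leftMulOn F N (ι a)`. -/
def leftMulOn (F : Type*) [CommSemiring F] {A : Type*} [Ring A] [Algebra F A]
    (N : Submodule A A) (a : A) :
    ↥(N.restrictScalars F) →ₗ[F] ↥(N.restrictScalars F) where
  toFun x := ⟨a * (x : A), by simpa [smul_eq_mul] using N.smul_mem a x.2⟩
  map_add' x y := by ext; simp [mul_add]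
  map_smul' c x := by ext; simp [Algebra.mul_smul_comm]

/-- Let `A` be a finite-dimensional algebra over a field `F` with a symmetric,
associative, non-degenerate `F`-bilinear form `B`, let `ι : A → A` be an involutory
`F`-algebra anti-automorphism, and let `ω ∈ A`. Then `Hom_F(Aω, F)^ι ≅ Aω^ι` as left
`A`-modules, where `Hom_F(Aω,F)^ι` carries the left action `a·f := f·ι(a)` and
`Aω^ι = span_A {ι ω}` is the left ideal generated by `ω^ι = ι(ω)`. -/
theorem symmetric_algebra_twisted_dual (F : Type*) [Field F] (A : Type*) [Ring A]
    [Algebra F A] [FiniteDimensional F A] (B : A →ₗ[F] A →ₗ[F] F)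
    (hsymm : ∀ a b : A, B a b = B b a)
    (hassoc : ∀ a b c : A, B (a * b) c = B a (b * c))
    (hnondeg : ∀ a : A, (∀ b : A, B a b = 0) → a = 0)
    (ι : A →ₗ[F] A) (hanti : ∀ a b : A, ι (a * b) = ι b * ι a) (hinv : ∀ a : A, ι (ι a) = a)
    (ω : A) :
    ∃ e : Module.Dual F ↥((Submodule.span A {ω}).restrictScalars F) ≃ₗ[F]
        ↥((Submodule.span A {ι ω}).restrictScalars F),
      ∀ (f : Module.Dual F ↥((Submodule.span A {ω}).restrictScalars F)) (a : A),
        (e (f ∘ₗ leftMulOn F (Submodule.span A {ω}) (ι a)) : A) = a * (e f : A) := by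
  classical
  set N : Submodule F A := (Submodule.span A {ω}).restrictScalars F with hN
  set N' : Submodule F A := (Submodule.span A {ι ω}).restrictScalars F with hN'
  have hιinj : Function.Injective ι := fun a b h => by rw [← hinv a, h, hinv b]
  -- χ : A → N', u ↦ ι (ω * u)
  have hχmem : ∀ u : A, ι (ω * u) ∈ N' := by
    intro u
    simp only [hN', Submodule.restrictScalars_mem]
    exact Submodule.mem_span_singleton.mpr ⟨ι u, by rw [smul_eq_mul, ← hanti]⟩
  let χ : A →ₗ[F] N' := (ι ∘ₗ LinearMap.mulLeft F ω).codRestrict N' hχmem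
  have hχ_apply : ∀ u : A, (χ u : A) = ι (ω * u) := fun u => rfl
  have hχsurj : Function.Surjective χ := by
    rintro ⟨b, hb⟩
    obtain ⟨c, hc⟩ := Submodule.mem_span_singleton.mp hb
    refine ⟨ι c, Subtype.ext ?_⟩
    rw [hχ_apply, ← hinv (ω * ι c), hanti, hinv, hinv, ← smul_eq_mul, hc]
  -- g : A → Dual F N
  let g : A →ₗ[F] Module.Dual F N := N.dualRestrict ∘ₗ B
  have hg_apply : ∀ (u : A) (x : N), g u x = B u (x : A) := fun u x => rfl
  have hBsurj : Function.Surjective (B : A →ₗ[F] Module.Dual F A) := by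
    have hinj : Function.Injective (B : A →ₗ[F] Module.Dual F A) := by
      rw [← LinearMap.ker_eq_bot, LinearMap.ker_eq_bot']
      intro a ha
      exact hnondeg a fun b => by rw [ha]; rfl
    exact (LinearMap.injective_iff_surjective_of_finrank_eq_finrank
      Subspace.dual_finrank_eq.symm).mp hinj
  have hgsurj : Function.Surjective g :=
    (Subspace.dualRestrict_surjective).comp hBsurj
  -- kernels agree
  have hker : LinearMap.ker g = LinearMap.ker χ := by
    ext u
    simp only [LinearMap.mem_ker]
    constructor
    · intro hu
      apply Subtype.ext
      rw [hχ_apply]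
      show ι (ω * u) = (0 : A)
      rw [← ι.map_zero]
      refine congrArg ι (hnondeg _ fun b => ?_)
      rw [hsymm (ω * u) b, ← hassoc, hsymm (b * ω) u]
      have := LinearMap.congr_fun hu ⟨b * ω, by
        simp only [hN, Submodule.restrictScalars_mem]
        exact Submodule.mem_span_singleton.mpr ⟨b, by rw [smul_eq_mul]⟩⟩
      rw [hg_apply] at this
      exact this
    · intro hu
      have h0 : ω * u = 0 := by
        have : ι (ω * u) = ι 0 := by rw [ι.map_zero, ← hχ_apply u, hu]; rfl
        exact hιinj this
      ext x
      obtain ⟨t, ht⟩ := Submodule.mem_span_singleton.mp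
        (show (x : A) ∈ Submodule.span A {ω} from x.2)
      rw [hg_apply]
      have : (x : A) = t * ω := by rw [← smul_eq_mul, ht]
      rw [this, hsymm, hassoc, h0, map_zero]
      rfl
  -- assemble the equivalence
  let q1 := g.quotKerEquivOfSurjective hgsurj
  let q2 := χ.quotKerEquivOfSurjective hχsurj
  let e : Module.Dual F N ≃ₗ[F] N' :=
    q1.symm.trans ((Submodule.quotEquivOfEq _ _ hker).trans q2)
  have hq1 : ∀ u : A, q1 (Submodule.Quotient.mk u) = g u := fun u => rfl
  have hq2 : ∀ u : A, q2 (Submodule.Quotient.mk u) = χ u := fun u => rfl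
  have he : ∀ u : A, e (g u) = χ u := by
    intro u
    have : q1.symm (g u) = Submodule.Quotient.mk u := by
      apply q1.injective; rw [LinearEquiv.apply_symm_apply, hq1]
    simp only [e, LinearEquiv.trans_apply, this, Submodule.quotEquivOfEq_mk, hq2]
  refine ⟨e, fun f a => ?_⟩
  obtain ⟨u, hu⟩ := hgsurj f
  have h1 : f ∘ₗ leftMulOn F (Submodule.span A {ω}) (ι a) = g (u * ι a) := by
    ext x
    rw [hg_apply, hassoc, ← hu]
    rfl
  rw [h1, he, ← hu, he, hχ_apply, hχ_apply, ← mul_assoc, ← hinv a, ← hanti, hinv]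
end

section
/- Let k ≥ 2 and p ≥ 2 be integers, and let x_0, x_1, x_2, … be real numbers with 0 ≤ x_t ≤ 1 for all t, satisfying the recursion x_t = 1 − Σ_{i=1}^{t} (k·p^{t−i})^{−(p^i − 1)} · (x_{t−i})^{p^i} for every t ≥ 0. Then x_t > 0 for all t ≥ 0. (In particular, Σ_{i=1}^{t} (k·p^{t−i})^{−(p^i − 1)} ≤ Σ_{i=1}^{t} k^{−(p^i−1)} < (k−1)^{−1} ≤ 1.) -/
lemma geo_aux (k : ℕ) (hk : 2 ≤ k) (t : ℕ) :
    ∑ i ∈ Finset.Icc 1 t, (((k : ℝ)) ^ i)⁻¹ < ((k : ℝ) - 1)⁻¹ := by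
  have hk1 : (1 : ℝ) < (k : ℝ) := by exact_mod_cast hk.trans_lt' one_lt_two
  have hkpos : (0 : ℝ) < (k : ℝ) := by positivity
  have hne : (k : ℝ) ≠ 0 := by linarith
  have hne1 : (k : ℝ) - 1 ≠ 0 := by linarith
  have closed : ∀ n, ∑ i ∈ Finset.Icc 1 n, (((k : ℝ)) ^ i)⁻¹ =
      ((k : ℝ) - 1)⁻¹ * (1 - (((k : ℝ))⁻¹) ^ n) := by
    intro n
    induction n with
    | zero => simp
    | succ m ih =>
      rw [Finset.sum_Icc_succ_top (by omega : 1 ≤ m + 1), ih]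
      field_simp
      have hm : (k:ℝ)^m * ((k:ℝ)⁻¹)^m = 1 := by rw [← mul_pow, mul_inv_cancel₀ hne, one_pow]
      have h1 : (k:ℝ) * (k:ℝ)⁻¹ = 1 := mul_inv_cancel₀ hne
      linear_combination (1 - (k:ℝ)) * hm + (k:ℝ)^m * ((k:ℝ)⁻¹)^m * h1
  rw [closed t]
  have hrt : (0 : ℝ) < (((k : ℝ))⁻¹) ^ t := by positivity
  have hinv : (0 : ℝ) < ((k : ℝ) - 1)⁻¹ := inv_pos.mpr (by linarith)
  nlinarith

/-- Let `k ≥ 2` and `p ≥ 2` be integers, and let `x_0, x_1, x_2, …` be real numbers with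
`0 ≤ x_t ≤ 1` for all `t`, satisfying the recursion
`x_t = 1 − Σ_{i=1}^{t} (k·p^{t−i})^{−(p^i − 1)} · (x_{t−i})^{p^i}` for every `t ≥ 0`.
Then `x_t > 0` for all `t ≥ 0`. (In particular,
`Σ_{i=1}^{t} (k·p^{t−i})^{−(p^i − 1)} ≤ Σ_{i=1}^{t} k^{−(p^i−1)} < (k−1)^{−1} ≤ 1`.) -/
theorem lie_module_recursion_pos (k p : ℕ) (hk : 2 ≤ k) (hp : 2 ≤ p) (x : ℕ → ℝ)
    (hx0 : ∀ t, 0 ≤ x t) (hx1 : ∀ t, x t ≤ 1)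
    (hrec : ∀ t, x t = 1 - ∑ i ∈ Finset.Icc 1 t,
      (((k : ℝ) * (p : ℝ) ^ (t - i)) ^ (p ^ i - 1))⁻¹ * (x (t - i)) ^ (p ^ i)) :
    (∀ t, 0 < x t) ∧
    (∀ t, ∑ i ∈ Finset.Icc 1 t, (((k : ℝ) * (p : ℝ) ^ (t - i)) ^ (p ^ i - 1))⁻¹ ≤
      ∑ i ∈ Finset.Icc 1 t, (((k : ℝ)) ^ (p ^ i - 1))⁻¹) ∧
    (∀ t, ∑ i ∈ Finset.Icc 1 t, (((k : ℝ)) ^ (p ^ i - 1))⁻¹ < ((k : ℝ) - 1)⁻¹) ∧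
    ((k : ℝ) - 1)⁻¹ ≤ 1 := by
  have hk1 : (1 : ℝ) < (k : ℝ) := by exact_mod_cast hk.trans_lt' one_lt_two
  have hkpos : (0 : ℝ) < (k : ℝ) := by linarith
  have hppos : (0 : ℝ) < (p : ℝ) := by
    have : (0:ℕ) < p := by omega
    exact_mod_cast this
  have hp1 : (1 : ℝ) ≤ (p : ℝ) := by
    have : (1:ℕ) ≤ p := by omega
    exact_mod_cast this
  -- (2)
  have h2 : ∀ t, ∑ i ∈ Finset.Icc 1 t, (((k : ℝ) * (p : ℝ) ^ (t - i)) ^ (p ^ i - 1))⁻¹ ≤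
      ∑ i ∈ Finset.Icc 1 t, (((k : ℝ)) ^ (p ^ i - 1))⁻¹ := by
    intro t
    refine Finset.sum_le_sum fun i _ => ?_
    have hle : (k : ℝ) ≤ (k : ℝ) * (p : ℝ) ^ (t - i) := by
      nlinarith [one_le_pow₀ hp1 (n := t - i)]
    have := pow_le_pow_left₀ (le_of_lt hkpos) hle (p ^ i - 1)
    exact inv_anti₀ (by positivity) this
  -- (3)
  have h3 : ∀ t, ∑ i ∈ Finset.Icc 1 t, (((k : ℝ)) ^ (p ^ i - 1))⁻¹ < ((k : ℝ) - 1)⁻¹ := by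
    intro t
    have step : ∑ i ∈ Finset.Icc 1 t, (((k : ℝ)) ^ (p ^ i - 1))⁻¹ ≤
        ∑ i ∈ Finset.Icc 1 t, (((k : ℝ)) ^ i)⁻¹ := by
      refine Finset.sum_le_sum fun i _ => ?_
      have hip : i ≤ p ^ i - 1 := by
        have := Nat.lt_pow_self (n := i) (by omega : 1 < p)
        omega
      exact inv_anti₀ (by positivity) (pow_le_pow_right₀ (le_of_lt hk1) hip)
    exact lt_of_le_of_lt step (geo_aux k hk t)
  -- (4)
  have h4 : ((k : ℝ) - 1)⁻¹ ≤ 1 := by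
    rw [inv_le_one_iff₀]
    right
    have : (2 : ℝ) ≤ (k : ℝ) := by exact_mod_cast hk
    linarith
  refine ⟨?_, h2, h3, h4⟩
  intro t
  have hS : ∑ i ∈ Finset.Icc 1 t,
      (((k : ℝ) * (p : ℝ) ^ (t - i)) ^ (p ^ i - 1))⁻¹ * (x (t - i)) ^ (p ^ i) ≤
      ∑ i ∈ Finset.Icc 1 t, (((k : ℝ) * (p : ℝ) ^ (t - i)) ^ (p ^ i - 1))⁻¹ := by
    refine Finset.sum_le_sum fun i _ => ?_
    have h1 : (x (t - i)) ^ (p ^ i) ≤ 1 := pow_le_one₀ (hx0 _) (hx1 _)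
    have hinv : (0:ℝ) ≤ (((k : ℝ) * (p : ℝ) ^ (t - i)) ^ (p ^ i - 1))⁻¹ := by positivity
    calc _ ≤ (((k : ℝ) * (p : ℝ) ^ (t - i)) ^ (p ^ i - 1))⁻¹ * 1 :=
          mul_le_mul_of_nonneg_left h1 hinv
      _ = _ := mul_one _
  have := (hS.trans (h2 t)).trans_lt (h3 t)
  rw [hrec t]
  linarith
end

section
/- Let F be an algebraically closed field of characteristic 2. Then the Lie module Lie_F(4) = F𝔖_4·ω_4 is an indecomposable, non-projective F𝔖_4-module of dimension 6. -/
set_option maxRecDepth 40000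
set_option maxHeartbeats 1000000
set_option linter.unusedSectionVars false

/-- A module is indecomposable if it is non-zero and admits no non-trivial direct sum
decomposition into submodules. -/
def IsIndecomposableModule (R M : Type*) [Ring R] [AddCommGroup M] [Module R M] : Prop :=
  Nontrivial M ∧ ∀ U V : Submodule R M, IsCompl U V → U = ⊥ ∨ V = ⊥


namespace Lie4Aux

abbrev G4 := Equiv.Perm (Fin 4)
abbrev V2 := G4 → ZMod 2

def pm (f g : Fin 4 → Fin 4) (h1 : ∀ x, g (f x) = x := by decide)
    (h2 : ∀ x, f (g x) = x := by decide) : G4 := ⟨f, g, h1, h2⟩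

def p0 : G4 := pm ![0,1,2,3] ![0,1,2,3]
def p1 : G4 := pm ![0,1,3,2] ![0,1,3,2]
def p2 : G4 := pm ![0,2,1,3] ![0,2,1,3]
def p3 : G4 := pm ![0,2,3,1] ![0,3,1,2]
def p4 : G4 := pm ![0,3,1,2] ![0,2,3,1]
def p5 : G4 := pm ![0,3,2,1] ![0,3,2,1]
def p6 : G4 := pm ![1,0,2,3] ![1,0,2,3]
def p8 : G4 := pm ![1,2,0,3] ![2,0,1,3]
def c3L : G4 := pm ![2,0,1,3] ![1,2,0,3]
def c4L : G4 := pm ![3,0,1,2] ![1,2,3,0]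
def s3 : G4 := pm ![2,1,0,3] ![2,1,0,3]
def s5 : G4 := pm ![3,1,0,2] ![2,1,3,0]
def s6 : G4 := pm ![3,2,0,1] ![2,3,1,0]
def s7 : G4 := pm ![3,2,1,0] ![3,2,1,0]

def e : Fin 24 → G4 := ![pm ![0,1,2,3] ![0,1,2,3], pm ![0,1,3,2] ![0,1,3,2], pm ![0,2,1,3] ![0,2,1,3], pm ![0,2,3,1] ![0,3,1,2], pm ![0,3,1,2] ![0,2,3,1], pm ![0,3,2,1] ![0,3,2,1], pm ![1,0,2,3] ![1,0,2,3], pm ![1,0,3,2] ![1,0,3,2], pm ![1,2,0,3] ![2,0,1,3], pm ![1,2,3,0] ![3,0,1,2], pm ![1,3,0,2] ![2,0,3,1], pm ![1,3,2,0] ![3,0,2,1], pm ![2,0,1,3] ![1,2,0,3], pm ![2,0,3,1] ![1,3,0,2], pm ![2,1,0,3] ![2,1,0,3], pm ![2,1,3,0] ![3,1,0,2], pm ![2,3,0,1] ![2,3,0,1], pm ![2,3,1,0] ![3,2,0,1], pm ![3,0,1,2] ![1,2,3,0], pm ![3,0,2,1] ![1,3,2,0], pm ![3,1,0,2] ![2,1,3,0],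 pm ![3,1,2,0] ![3,1,2,0], pm ![3,2,0,1] ![2,3,1,0], pm ![3,2,1,0] ![3,2,1,0]]

def dl (g : G4) : V2 := fun h => if h = g then 1 else 0
def tr (g : G4) (x : V2) : V2 := fun k => x (g⁻¹ * k)
def conv (x y : V2) : V2 := fun g => ∑ h : G4, x h * y (h⁻¹ * g)

def wL : V2 := dl p0 + dl p6 + dl c3L + dl s3 + dl c4L + dl s5 + dl s6 + dl s7
def P : Fin 6 → G4 := ![p0,p1,p2,p3,p4,p5]
def v (j : Fin 6) : V2 := tr (P j) wL
def nu2 : V2 := v 2 + v 3 + v 4 + v 5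
def blC : V2 := dl p0 + dl c4L

lemma conv_add_left (x y z : V2) : conv (x + y) z = conv x z + conv y z := by
  funext k; simp [conv, add_mul, Finset.sum_add_distrib]

lemma conv_dl (g : G4) (z : V2) : conv (dl g) z = tr g z := by
  funext k
  simp [conv, dl, tr, ite_mul, Fintype.sum_ite_eq']

lemma hp0 : p0 = (1 : G4) := by decide

lemma e_inj : Function.Injective e := by
  intro i j h
  revert h
  revert i j
  decide

lemma e_surj : Function.Surjective e := by
  have : Function.Bijective e := (Fintype.bijective_iff_injective_and_card e).mpr
    ⟨e_inj, by simp [Fintype.card_perm]; rfl⟩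
  exact this.2

lemma ext24 {x y : V2} (h : ∀ i : Fin 24, x (e i) = y (e i)) : x = y := by
  funext g
  obtain ⟨i, rfl⟩ := e_surj g
  exact h i

lemma dd_w : tr p0 (tr p0 blC + tr c3L blC) + tr p6 (tr p0 blC + tr c3L blC) = wL := by
  refine ext24 fun i => ?_; revert i; decide

lemma dd_ww : tr p0 wL + tr p6 wL + tr c3L wL + tr s3 wL + tr c4L wL + tr s5 wL
    + tr s6 wL + tr s7 wL = 0 := by
  refine ext24 fun i => ?_; revert i; decide

lemma dd_a1 : tr p0 wL + tr p6 wL = 0 := by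
  refine ext24 fun i => ?_; revert i; decide

lemma dd_a2 : tr p0 wL + tr p2 wL + tr p8 wL = 0 := by
  refine ext24 fun i => ?_; revert i; decide

lemma dd_bnu : tr p2 nu2 + tr p3 nu2 + tr p4 nu2 + tr p5 nu2 = 0 := by
  refine ext24 fun i => ?_; revert i; decide

lemma dd_v0 : v 0 = wL := by
  refine ext24 fun i => ?_; revert i; decide

lemma dec_eval : ∀ i j : Fin 6, v j (P i) = if i = j then 1 else 0 := by decide

lemma dd_span : ∀ g : G4, tr g wL = ∑ j : Fin 6, (tr g wL (P j)) • v j := by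
  intro g
  obtain ⟨k, rfl⟩ := e_surj g
  refine ext24 fun i => ?_
  have h : ∀ k i : Fin 24, tr (e k) wL (e i)
      = ∑ j : Fin 6, (tr (e k) wL (P j)) • v j (e i) := by decide
  rw [Finset.sum_apply]
  exact h k i

lemma row1_0 : (tr p0 (v 0) + tr p6 (v 0)) p2 = 0 := by decide
lemma row1_1 : (tr p0 (v 1) + tr p6 (v 1)) p2 = 0 := by decide
lemma row1_2 : (tr p0 (v 2) + tr p6 (v 2)) p2 = 0 := by decide
lemma row1_3 : (tr p0 (v 3) + tr p6 (v 3)) p2 = 1 := by decide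
lemma row1_4 : (tr p0 (v 4) + tr p6 (v 4)) p2 = 0 := by decide
lemma row1_5 : (tr p0 (v 5) + tr p6 (v 5)) p2 = 1 := by decide
lemma row2_0 : (tr p0 (v 0) + tr p6 (v 0)) c3L = 0 := by decide
lemma row2_1 : (tr p0 (v 1) + tr p6 (v 1)) c3L = 0 := by decide
lemma row2_2 : (tr p0 (v 2) + tr p6 (v 2)) c3L = 1 := by decide
lemma row2_3 : (tr p0 (v 3) + tr p6 (v 3)) c3L = 0 := by decide
lemma row2_4 : (tr p0 (v 4) + tr p6 (v 4)) c3L = 1 := by decide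
lemma row2_5 : (tr p0 (v 5) + tr p6 (v 5)) c3L = 0 := by decide
lemma row3_0 : (tr p0 (v 0) + tr p6 (v 0)) p1 = 0 := by decide
lemma row3_1 : (tr p0 (v 1) + tr p6 (v 1)) p1 = 0 := by decide
lemma row3_2 : (tr p0 (v 2) + tr p6 (v 2)) p1 = 0 := by decide
lemma row3_3 : (tr p0 (v 3) + tr p6 (v 3)) p1 = 0 := by decide
lemma row3_4 : (tr p0 (v 4) + tr p6 (v 4)) p1 = 1 := by decide
lemma row3_5 : (tr p0 (v 5) + tr p6 (v 5)) p1 = 1 := by decide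
lemma row4_0 : (tr p0 (v 0) + tr p2 (v 0) + tr p8 (v 0)) p0 = 0 := by decide
lemma row4_1 : (tr p0 (v 1) + tr p2 (v 1) + tr p8 (v 1)) p0 = 1 := by decide
lemma row4_2 : (tr p0 (v 2) + tr p2 (v 2) + tr p8 (v 2)) p0 = 0 := by decide
lemma row4_3 : (tr p0 (v 3) + tr p2 (v 3) + tr p8 (v 3)) p0 = 0 := by decide
lemma row4_4 : (tr p0 (v 4) + tr p2 (v 4) + tr p8 (v 4)) p0 = 0 := by decide
lemma row4_5 : (tr p0 (v 5) + tr p2 (v 5) + tr p8 (v 5)) p0 = 0 := by decide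
lemma dec_w1 : wL 1 = 1 := by decide
lemma dec_wp2 : wL p2 = 0 := by decide
lemma dec_nu1 : nu2 1 = 0 := by decide
lemma dec_nup2 : nu2 p2 = 1 := by decide

/-! ### Transport to `MonoidAlgebra F G4` -/

section Transport

open MonoidAlgebra

variable (F : Type*) [Field F] [CharP F 2]

noncomputable def ct : ZMod 2 →+* F := ZMod.castHom (dvd_refl 2) F

noncomputable def psi : V2 →+ MonoidAlgebra F G4 where
  toFun x := ∑ g : G4, single g (ct F (x g))
  map_zero' := by simp
  map_add' x y := by
    simp only [Pi.add_apply, map_add, single_add, Finset.sum_add_distrib]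

lemma psi_apply (x : V2) (g : G4) : (psi F x).coeff g = ct F (x g) := by
  show (∑ h : G4, (single h (ct F (x h)) : MonoidAlgebra F G4)).coeff g = _
  rw [MonoidAlgebra.coeff_sum, Finsupp.finset_sum_apply]
  simp [Finsupp.single_apply, Fintype.sum_ite_eq']

lemma psi_dl (g : G4) : psi F (dl g) = single g 1 := by
  refine MonoidAlgebra.ext (Finsupp.ext fun h => ?_)
  rw [psi_apply]
  by_cases hh : h = g
  · subst hh; simp [dl, Finsupp.single_apply]
  · simp [dl, hh, Finsupp.single_apply, Ne.symm hh]

lemma psi_conv (x y : V2) : psi F (conv x y) = psi F x * psi F y := by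
  show (∑ k : G4, (single k (ct F (conv x y k)) : MonoidAlgebra F G4))
    = (∑ g : G4, (single g (ct F (x g)) : MonoidAlgebra F G4)) * ∑ h : G4, single h (ct F (y h))
  rw [Finset.sum_mul_sum]
  simp_rw [MonoidAlgebra.single_mul_single]
  have key : ∀ g : G4, (∑ h : G4, (single (g * h) (ct F (x g) * ct F (y h)) : MonoidAlgebra F G4))
      = ∑ k : G4, single k (ct F (x g) * ct F (y (g⁻¹ * k))) := by
    intro g
    refine Fintype.sum_equiv (Equiv.mulLeft g) _ _ fun h => ?_
    simp [Equiv.mulLeft]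
  simp_rw [key]
  rw [Finset.sum_comm]
  refine Finset.sum_congr rfl fun k _ => ?_
  show single k (ct F (∑ h : G4, x h * y (h⁻¹ * k))) = _
  rw [map_sum]
  simp_rw [map_mul]
  refine MonoidAlgebra.ext ?_
  rw [MonoidAlgebra.coeff_sum]
  simp only [MonoidAlgebra.coeff_single]
  exact Finsupp.single_finset_sum _ _ _

lemma psi_smul (c : ZMod 2) (x : V2) : psi F (c • x) = ct F c • psi F x := by
  have hc : c = 0 ∨ c = 1 := by revert c; decide
  rcases hc with rfl | rfl
  · simp
  · simp




noncomputable def ww : MonoidAlgebra F G4 := psi F wL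
noncomputable def Vf (j : Fin 6) : MonoidAlgebra F G4 := psi F (v j)
noncomputable def nuR : MonoidAlgebra F G4 := psi F nu2
noncomputable def a1R : MonoidAlgebra F G4 := psi F (dl p0 + dl p6)
noncomputable def a2R : MonoidAlgebra F G4 := psi F (dl p0 + dl p2 + dl p8)
noncomputable def bR : MonoidAlgebra F G4 := psi F (dl p2 + dl p3 + dl p4 + dl p5)

lemma psi_tr_add₂ (a b : G4) (z : V2) :
    psi F (dl a + dl b) * psi F z = psi F (tr a z + tr b z) := by
  rw [← psi_conv, conv_add_left, conv_dl, conv_dl]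

lemma psi_tr_add₃ (a b c : G4) (z : V2) :
    psi F (dl a + dl b + dl c) * psi F z = psi F (tr a z + tr b z + tr c z) := by
  rw [← psi_conv, conv_add_left, conv_add_left, conv_dl, conv_dl, conv_dl]

lemma psi_tr_add₄ (a b c d : G4) (z : V2) :
    psi F (dl a + dl b + dl c + dl d) * psi F z
      = psi F (tr a z + tr b z + tr c z + tr d z) := by
  rw [← psi_conv, conv_add_left, conv_add_left, conv_add_left, conv_dl, conv_dl, conv_dl, conv_dl]

lemma a1_mul_ww : a1R F * ww F = 0 := by
  rw [a1R, ww, psi_tr_add₂, dd_a1, map_zero]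

lemma a2_mul_ww : a2R F * ww F = 0 := by
  rw [a2R, ww, psi_tr_add₃, dd_a2, map_zero]

lemma b_mul_ww : bR F * ww F = nuR F := by
  rw [bR, ww, psi_tr_add₄, nuR]
  congr 1

lemma b_mul_nu : bR F * nuR F = 0 := by
  rw [bR, nuR, psi_tr_add₄, dd_bnu, map_zero]

lemma ww_mul_ww : ww F * ww F = 0 := by
  rw [ww, ← psi_conv]
  rw [show conv wL wL = conv (dl p0 + dl p6 + dl c3L + dl s3 + dl c4L + dl s5 + dl s6 + dl s7) wL
    from rfl]
  rw [conv_add_left, conv_add_left, conv_add_left, conv_add_left, conv_add_left, conv_add_left,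
    conv_add_left, conv_dl, conv_dl, conv_dl, conv_dl, conv_dl, conv_dl, conv_dl, conv_dl]
  rw [dd_ww, map_zero]

lemma dsw_eq : dsw F 4 = ww F := by
  have hc2 : (Fin.cycleRange (1 : Fin 4))⁻¹ = p6 := by decide
  have hc3 : (Fin.cycleRange (2 : Fin 4))⁻¹ = c3L := by decide
  have hc4 : (Fin.cycleRange (3 : Fin 4))⁻¹ = c4L := by decide
  have hl : ((List.finRange 4).take 4).tail = [(1 : Fin 4), 2, 3] := by decide
  have fact : ∀ g : G4, (1 : MonoidAlgebra F G4) - MonoidAlgebra.of F G4 g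
      = psi F (dl p0 + dl g) := by
    intro g
    rw [map_add, psi_dl, psi_dl, MonoidAlgebra.of_apply, MonoidAlgebra.one_def, hp0]
    rw [sub_eq_add_neg]
    congr 1
    rw [show -(MonoidAlgebra.single g 1 : MonoidAlgebra F G4) = MonoidAlgebra.single g (-1)
      from (MonoidAlgebra.single_neg g (1:F)).symm, show (-1 : F) = 1 from CharTwo.neg_eq 1]
  rw [dsw, dswPartial, hl]
  simp only [List.map_cons, List.map_nil, List.prod_cons, List.prod_nil, mul_one]
  rw [hc2, hc3, hc4, fact, fact, fact, psi_tr_add₂, psi_tr_add₂, ww]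
  congr 1
  rw [← dd_w]
  rfl

lemma Vf_eq (j : Fin 6) : Vf F j = MonoidAlgebra.single (P j) 1 * ww F := by
  rw [Vf, v, ← conv_dl, psi_conv, psi_dl, ww]

lemma single_mul_ww (g : G4) :
    MonoidAlgebra.single g 1 * ww F = ∑ j : Fin 6, ct F (tr g wL (P j)) • Vf F j := by
  rw [← psi_dl, ww, ← psi_conv, conv_dl]
  conv_lhs => rw [dd_span g]
  rw [map_sum]
  refine Finset.sum_congr rfl fun j _ => ?_
  rw [psi_smul, Vf]

lemma ww_apply_one : (ww F).coeff 1 = 1 := by rw [ww, psi_apply, dec_w1, map_one]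
lemma ww_apply_p2 : (ww F).coeff p2 = 0 := by rw [ww, psi_apply, dec_wp2, map_zero]
lemma nuR_apply_one : (nuR F).coeff 1 = 0 := by rw [nuR, psi_apply, dec_nu1, map_zero]
lemma nuR_apply_p2 : (nuR F).coeff p2 = 1 := by rw [nuR, psi_apply, dec_nup2, map_one]

lemma decomp (u : MonoidAlgebra F G4) : u = ∑ g : G4, MonoidAlgebra.single g (u.coeff g) :=
  MonoidAlgebra.ext (by
    rw [MonoidAlgebra.coeff_sum]
    simp only [MonoidAlgebra.coeff_single]
    exact (Finsupp.sum_single u.coeff).symm.trans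
      (Finsupp.sum_fintype _ _ fun i => Finsupp.single_zero i))

lemma trace_comm (u y : MonoidAlgebra F G4) : (u * y).coeff 1 = (y * u).coeff 1 := by
  conv_lhs => rw [decomp F u]
  conv_rhs => rw [decomp F u]
  rw [Finset.sum_mul, Finset.mul_sum, MonoidAlgebra.coeff_sum, MonoidAlgebra.coeff_sum,
    Finsupp.finset_sum_apply, Finsupp.finset_sum_apply]
  refine Finset.sum_congr rfl fun g _ => ?_
  rw [MonoidAlgebra.single_mul_apply, MonoidAlgebra.mul_single_apply, mul_one, one_mul]
  exact mul_comm _ _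

-- appended into section Transport (variable F in scope)

lemma ma_smul_apply (a : F) (x : MonoidAlgebra F G4) (g : G4) : (a • x).coeff g = a * x.coeff g := rfl

lemma ma_add_apply (x y : MonoidAlgebra F G4) (g : G4) : (x + y).coeff g = x.coeff g + y.coeff g := rfl

noncomputable abbrev SS : Submodule (MonoidAlgebra F G4) (MonoidAlgebra F G4) :=
  Submodule.span (MonoidAlgebra F G4) {dsw F 4}

lemma res_eq : (SS F).restrictScalars F = Submodule.span F (Set.range (Vf F)) := by
  apply le_antisymm
  · intro x hx
    rw [Submodule.restrictScalars_mem, Submodule.mem_span_singleton] at hx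
    obtain ⟨a, rfl⟩ := hx
    rw [smul_eq_mul, dsw_eq]
    have hdec : a * ww F = ∑ g : G4, MonoidAlgebra.single g (a.coeff g) * ww F := by
      conv_lhs => rw [decomp F a]
      rw [Finset.sum_mul]
    rw [hdec]
    refine Submodule.sum_mem _ fun g _ => ?_
    have h1 : MonoidAlgebra.single g (a.coeff g) * ww F
        = (a.coeff g) • (MonoidAlgebra.single g 1 * ww F) := by
      rw [← smul_mul_assoc, MonoidAlgebra.smul_single', mul_one]
    rw [h1, single_mul_ww]
    refine Submodule.smul_mem _ _ (Submodule.sum_mem _ fun j _ => ?_)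
    exact Submodule.smul_mem _ _ (Submodule.subset_span ⟨j, rfl⟩)
  · rw [Submodule.span_le]
    rintro x ⟨j, rfl⟩
    rw [SetLike.mem_coe, Submodule.restrictScalars_mem]
    rw [Vf_eq, ← dsw_eq, ← smul_eq_mul]
    exact Submodule.smul_mem _ _ (Submodule.mem_span_singleton_self _)

lemma Vf_indep : LinearIndependent F (Vf F) := by
  rw [Fintype.linearIndependent_iff]
  intro c hc i
  have h2 : ∀ j, (Vf F j).coeff (P i) = if i = j then (1:F) else 0 := by
    intro j
    rw [Vf, psi_apply, dec_eval i j]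
    by_cases h : i = j <;> simp [h]
  have h3 : (∑ j : Fin 6, c j • Vf F j).coeff (P i) = (0 : MonoidAlgebra F G4).coeff (P i) :=
    congrArg (fun z : MonoidAlgebra F G4 => z.coeff (P i)) hc
  rw [MonoidAlgebra.coeff_sum, Finsupp.finset_sum_apply] at h3
  simp only [ma_smul_apply, h2, mul_ite, mul_one, mul_zero] at h3
  rw [Fintype.sum_ite_eq] at h3
  simpa using h3

lemma finrank_six : Module.finrank F ((SS F).restrictScalars F) = 6 := by
  rw [res_eq, finrank_span_eq_card (Vf_indep F)]
  simp

lemma endo_trivial (φ : ↥(SS F) →ₗ[MonoidAlgebra F G4] ↥(SS F))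
    (hid : ∀ m, φ (φ m) = φ m) : (∀ m, φ m = 0) ∨ (∀ m, φ m = m) := by
  have hωmem : dsw F 4 ∈ SS F := Submodule.mem_span_singleton_self _
  set ωM : ↥(SS F) := ⟨dsw F 4, hωmem⟩ with hωM
  have hyspan : (↑(φ ωM) : MonoidAlgebra F G4) ∈ Submodule.span F (Set.range (Vf F)) := by
    rw [← res_eq]
    exact (φ ωM).2
  obtain ⟨c, hc⟩ := (Submodule.mem_span_range_iff_exists_fun F).mp hyspan
  set y : MonoidAlgebra F G4 := ↑(φ ωM) with hy
  have hann : ∀ a : MonoidAlgebra F G4, a * dsw F 4 = 0 → a * y = 0 := by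
    intro a ha
    have h1 : a • ωM = 0 := by
      apply Subtype.ext
      rw [Submodule.coe_smul, ZeroMemClass.coe_zero, hωM, smul_eq_mul]
      exact ha
    have h2 : a • φ ωM = 0 := by rw [← map_smul, h1, map_zero]
    have h3 := congrArg (Subtype.val (p := fun z => z ∈ SS F)) h2
    rw [Submodule.coe_smul] at h3
    simpa [smul_eq_mul] using h3
  have key : ∀ a : MonoidAlgebra F G4, a * y = 0 → ∀ q : G4,
      ∑ j : Fin 6, c j * ((a * Vf F j).coeff q) = 0 := by
    intro a h q
    have h0 : (a * y).coeff q = 0 := by rw [h]; simp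
    rw [← hc, Finset.mul_sum] at h0
    simp_rw [mul_smul_comm] at h0
    rw [MonoidAlgebra.coeff_sum, Finsupp.finset_sum_apply] at h0
    simpa [MonoidAlgebra.coeff_smul, Finsupp.smul_apply, smul_eq_mul] using h0
  have ha1v : ∀ j, a1R F * Vf F j = psi F (tr p0 (v j) + tr p6 (v j)) := fun j => by
    rw [a1R, Vf, psi_tr_add₂]
  have ha2v : ∀ j, a2R F * Vf F j = psi F (tr p0 (v j) + tr p2 (v j) + tr p8 (v j)) := fun j => by
    rw [a2R, Vf, psi_tr_add₃]
  have hA1 : a1R F * y = 0 := hann _ (by rw [dsw_eq]; exact a1_mul_ww F)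
  have hA2 : a2R F * y = 0 := hann _ (by rw [dsw_eq]; exact a2_mul_ww F)
  have e1 : c 3 + c 5 = 0 := by
    have h := key _ hA1 p2
    rw [Fin.sum_univ_six] at h
    simp only [ha1v, psi_apply] at h
    rw [row1_0, row1_1, row1_2, row1_3, row1_4, row1_5] at h
    simpa using h
  have e2 : c 2 + c 4 = 0 := by
    have h := key _ hA1 c3L
    rw [Fin.sum_univ_six] at h
    simp only [ha1v, psi_apply] at h
    rw [row2_0, row2_1, row2_2, row2_3, row2_4, row2_5] at h
    simpa using h
  have e3 : c 4 + c 5 = 0 := by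
    have h := key _ hA1 p1
    rw [Fin.sum_univ_six] at h
    simp only [ha1v, psi_apply] at h
    rw [row3_0, row3_1, row3_2, row3_3, row3_4, row3_5] at h
    simpa using h
  have hc1 : c 1 = 0 := by
    have h := key _ hA2 p0
    rw [Fin.sum_univ_six] at h
    simp only [ha2v, psi_apply] at h
    rw [row4_0, row4_1, row4_2, row4_3, row4_4, row4_5] at h
    simpa using h
  have hch : ∀ u w : F, u + w = 0 → u = w := by
    intro u w h
    rw [add_eq_zero_iff_eq_neg, CharTwo.neg_eq] at h
    exact h
  have h35 := hch _ _ e1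
  have h24 := hch _ _ e2
  have h45 := hch _ _ e3
  have hv0 : Vf F 0 = ww F := by rw [Vf, dd_v0, ww]
  have hnu : nuR F = Vf F 2 + Vf F 3 + Vf F 4 + Vf F 5 := by
    rw [nuR, nu2, map_add, map_add, map_add, Vf, Vf, Vf, Vf]
  have h42 : c 4 = c 2 := h24.symm
  have h52 : c 5 = c 2 := h45.symm.trans h24.symm
  have h32 : c 3 = c 2 := h35.trans h52
  have hyab : y = c 0 • ww F + c 2 • nuR F := by
    rw [← hc, Fin.sum_univ_six, hc1, hv0, h32, h42, h52, hnu]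
    simp only [smul_add, zero_smul, add_zero, zero_add]
    abel
  set α := c 0 with hα'
  set β := c 2 with hβ'
  have hstep : φ ωM = (α • 1 + β • bR F) • ωM := by
    apply Subtype.ext
    rw [Submodule.coe_smul, hωM]
    show y = (α • 1 + β • bR F) • dsw F 4
    rw [smul_eq_mul, add_mul, smul_mul_assoc, smul_mul_assoc, one_mul, dsw_eq, b_mul_ww, hyab]
  have hq : (α • 1 + β • bR F) * y = y := by
    have h3 : (α • 1 + β • bR F) • φ ωM = φ ωM := by
      rw [← map_smul, ← hstep, hid]
    have h4 := congrArg (Subtype.val (p := fun z => z ∈ SS F)) h3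
    rw [Submodule.coe_smul] at h4
    simpa [smul_eq_mul] using h4
  have hcalc : (α • 1 + β • bR F) * y = (α*α) • ww F + ((α*β) • nuR F + (β*α) • nuR F) := by
    rw [hyab, add_mul, mul_add, mul_add, smul_mul_assoc, smul_mul_assoc, smul_mul_assoc,
      smul_mul_assoc, one_mul, one_mul, mul_smul_comm, mul_smul_comm, b_mul_ww, b_mul_nu,
      smul_zero, smul_smul, smul_smul, smul_smul, smul_zero, add_zero, add_assoc]
  have heq : (α*α) • ww F = α • ww F + β • nuR F := by
    rw [← hyab, ← hq, hcalc, ← add_smul, mul_comm β α, CharTwo.add_self_eq_zero, zero_smul,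
      add_zero]
  have hαeq : α * α = α := by
    have h7 : ((α*α) • ww F).coeff (1 : G4) = (α • ww F + β • nuR F).coeff (1 : G4) :=
      congrArg (fun z : MonoidAlgebra F G4 => z.coeff 1) heq
    rw [ma_smul_apply, ma_add_apply, ma_smul_apply, ma_smul_apply, ww_apply_one,
      nuR_apply_one] at h7
    simpa using h7
  have hβ0 : β = 0 := by
    have h7 : ((α*α) • ww F).coeff p2 = (α • ww F + β • nuR F).coeff p2 :=
      congrArg (fun z : MonoidAlgebra F G4 => z.coeff p2) heq
    rw [ma_smul_apply, ma_add_apply, ma_smul_apply, ma_smul_apply, ww_apply_p2,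
      nuR_apply_p2] at h7
    simpa using h7.symm
  have hα01 : α = 0 ∨ α = 1 := by
    have h5 : α * (α - 1) = 0 := by rw [mul_sub, mul_one, hαeq, sub_self]
    rcases mul_eq_zero.mp h5 with h | h
    · exact Or.inl h
    · exact Or.inr (sub_eq_zero.mp h)
  rcases hα01 with h0 | h1
  · left
    have hy0 : φ ωM = 0 := by
      apply Subtype.ext
      rw [ZeroMemClass.coe_zero, ← hy, hyab, h0, hβ0, zero_smul, zero_smul, add_zero]
    intro m
    obtain ⟨a, ha⟩ := Submodule.mem_span_singleton.mp m.2
    have hm : m = a • ωM := by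
      apply Subtype.ext
      rw [Submodule.coe_smul, hωM]
      exact ha.symm
    rw [hm, map_smul, hy0, smul_zero]
  · right
    have hy1 : φ ωM = ωM := by
      apply Subtype.ext
      show y = dsw F 4
      rw [hyab, h1, hβ0, one_smul, zero_smul, add_zero, dsw_eq]
    intro m
    obtain ⟨a, ha⟩ := Submodule.mem_span_singleton.mp m.2
    have hm : m = a • ωM := by
      apply Subtype.ext
      rw [Submodule.coe_smul, hωM]
      exact ha.symm
    rw [hm, map_smul, hy1, ← hm]

end Transport

end Lie4Aux


open Lie4Aux

/-- Let `F` be an algebraically closed field of characteristic 2. Then the Lie module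
`Lie_F(4) = F𝔖_4·ω_4` is an indecomposable, non-projective `F𝔖_4`-module of
dimension 6. -/
theorem lie4_indecomposable_not_projective (F : Type*) [Field F] [IsAlgClosed F] [CharP F 2] :
    Module.finrank F
      ↥((Submodule.span (MonoidAlgebra F (Equiv.Perm (Fin 4))) {dsw F 4}).restrictScalars F) = 6 ∧
    IsIndecomposableModule (MonoidAlgebra F (Equiv.Perm (Fin 4)))
      ↥(Submodule.span (MonoidAlgebra F (Equiv.Perm (Fin 4))) {dsw F 4}) ∧
    ¬ Module.Projective (MonoidAlgebra F (Equiv.Perm (Fin 4)))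
      ↥(Submodule.span (MonoidAlgebra F (Equiv.Perm (Fin 4))) {dsw F 4}) := by
  have hωmem : dsw F 4 ∈ SS F := Submodule.mem_span_singleton_self _
  have hdsw_ne : dsw F 4 ≠ 0 := by
    intro h
    have h1 : (dsw F 4).coeff (1 : G4) = 1 := by rw [dsw_eq, ww_apply_one]
    rw [h] at h1
    simp at h1
  refine ⟨finrank_six F, ⟨?_, ?_⟩, ?_⟩
  · exact ⟨⟨dsw F 4, hωmem⟩, 0, fun h => hdsw_ne (congrArg Subtype.val h)⟩
  · intro U V hUV
    set pr := Submodule.linearProjOfIsCompl U V hUV with hpr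
    set φ := U.subtype.comp pr with hφ
    have hidem : ∀ m, φ (φ m) = φ m := by
      intro m
      have h1 : pr (↑(pr m)) = pr m := Submodule.linearProjOfIsCompl_apply_left hUV (pr m)
      show U.subtype (pr (↑(pr m))) = U.subtype (pr m)
      rw [h1]
    rcases endo_trivial F φ hidem with h | h
    · left
      rw [eq_bot_iff]
      intro x hx
      have h1 : φ x = x := by
        show U.subtype (pr x) = x
        rw [show pr x = ⟨x, hx⟩ from Submodule.linearProjOfIsCompl_apply_left hUV ⟨x, hx⟩]
        rfl
      have h2 : x = 0 := by rw [← h1, h x]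
      exact (Submodule.mem_bot _).mpr h2
    · right
      rw [eq_bot_iff]
      intro x hx
      have h1 : φ x = 0 := by
        show U.subtype (pr x) = 0
        rw [show pr x = 0 from Submodule.linearProjOfIsCompl_apply_right' hUV hx]
        simp
      have h2 : x = 0 := by rw [← h x, h1]
      exact (Submodule.mem_bot _).mpr h2
  · intro hproj
    haveI := hproj
    set π := LinearMap.codRestrict (SS F) (LinearMap.toSpanSingleton (MonoidAlgebra F G4)
      (MonoidAlgebra F G4) (dsw F 4))
      (fun a => Submodule.smul_mem _ a (Submodule.mem_span_singleton_self _)) with hπ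
    have hsurj : Function.Surjective π := by
      intro m
      obtain ⟨a, ha⟩ := Submodule.mem_span_singleton.mp m.2
      refine ⟨a, Subtype.ext ?_⟩
      show a • dsw F 4 = ↑m
      exact ha
    obtain ⟨s, hs⟩ := Module.projective_lifting_property π LinearMap.id hsurj
    set y : MonoidAlgebra F G4 := s ⟨dsw F 4, hωmem⟩ with hy
    have h1 : dsw F 4 * y = 0 := by
      have hz : (dsw F 4) • (⟨dsw F 4, hωmem⟩ : ↥(SS F)) = 0 := by
        apply Subtype.ext
        show dsw F 4 * dsw F 4 = 0
        rw [dsw_eq]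
        exact ww_mul_ww F
      calc dsw F 4 * y = dsw F 4 • y := rfl
        _ = s ((dsw F 4) • ⟨dsw F 4, hωmem⟩) := (map_smul s _ _).symm
        _ = 0 := by rw [hz, map_zero]
    have h2 : y * dsw F 4 = dsw F 4 := by
      have h3 : π (s ⟨dsw F 4, hωmem⟩) = ⟨dsw F 4, hωmem⟩ := by
        rw [← LinearMap.comp_apply, hs, LinearMap.id_apply]
      have h4 := congrArg (Subtype.val (p := fun z => z ∈ SS F)) h3
      show y * dsw F 4 = dsw F 4
      rw [← smul_eq_mul]
      exact h4
    have ht := trace_comm F (dsw F 4) y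
    rw [h1, h2, dsw_eq, ww_apply_one] at ht
    simp at ht
end
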